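/- arXiv:2206.07525 — 5 statements merged into one kernel-verified Lean document; each statement's English description precedes it below -/
import Mathlib

section
/- Let φ: G → H be a graph homomorphism and let A ⊆ E(G) be a φ-stable edge set. For any closed walk P = v_0 v_1 v_2 v_3 v_0 of length 4 in G, the intersection invariant I_A(P) := |Ẽ(P) ∩ A| mod 2 equals 0, and for every vertex u of H, I_{A,u}(P) := |Ẽ(P) ∩ A_u| mod 2 equals 0, where A_u is the set of edges of A with an endpoint in φ^{-1}(u), and Ẽ(P) is the edge multiset of P. -/
namespace Discrete

variable {V : Type*} {W : Type*}

/-- `IsWalk G l` : the nonempty list `l` of vertices forms a walk in `G`. -/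
def IsWalk (G : SimpleGraph V) : List V → Prop
  | [] => False
  | [_] => True
  | a :: b :: l => G.Adj a b ∧ IsWalk G (b :: l)

/-- One elementary homotopy step: substitution, insertion, or deletion. -/
inductive Step (G : SimpleGraph V) : List V → List V → Prop
  | sub (p q : List V) (a b c b' : V) (h1 : G.Adj a b') (h2 : G.Adj b' c) :
      Step G (p ++ a :: b :: c :: q) (p ++ a :: b' :: c :: q)
  | ins (p q : List V) (a w : V) (h : G.Adj a w) :
      Step G (p ++ a :: q) (p ++ a :: w :: a :: q)
  | del (p q : List V) (a w : V) :
      Step G (p ++ a :: w :: a :: q) (p ++ a :: q)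

/-- Two walks are homotopic if one may be transformed into the other via a
finite sequence of substitution, insertion and deletion steps. -/
def Homotopic (G : SimpleGraph V) : List V → List V → Prop :=
  Relation.ReflTransGen (Step G)

/-- The multiset of edges of a walk, counted with multiplicity. -/
def walkEdges (l : List V) : Multiset (Sym2 V) :=
  ↑((l.zip l.tail).map Sym2.mk.uncurry)

/-- A closed walk: a walk whose endpoints coincide. -/
def IsClosedWalk (G : SimpleGraph V) (l : List V) : Prop :=
  IsWalk G l ∧ l.head? = l.getLast?

/-- A closed walk based at `v0`. -/
def IsClosedWalkAt (G : SimpleGraph V) (v0 : V) (l : List V) : Prop :=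
  IsWalk G l ∧ l.head? = some v0 ∧ l.getLast? = some v0

/-- A cycle, recorded as a closed walk `v0 v1 ... v_{k-1} v0` of length at
least 3 whose vertices `v0, ..., v_{k-1}` are distinct. -/
def IsCycleList (G : SimpleGraph V) (l : List V) : Prop :=
  IsClosedWalk G l ∧ l.dropLast.Nodup ∧ 4 ≤ l.length

/-- `G` is simply connected: any two walks with the same endpoints and lengths
of the same parity are homotopic. -/
def SimplyConnected (G : SimpleGraph V) : Prop :=
  G.Connected ∧ ∀ P P' : List V, IsWalk G P → IsWalk G P' →
    P.head? = P'.head? → P.getLast? = P'.getLast? →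
    (P.length - 1) % 2 = (P'.length - 1) % 2 → Homotopic G P P'

/-- Two edges of `H` lie in a common 4-cycle of `H`. -/
def InCommonC4 (H : SimpleGraph W) (e f : Sym2 W) : Prop :=
  ∃ a b c d : W, a ≠ b ∧ a ≠ c ∧ a ≠ d ∧ b ≠ c ∧ b ≠ d ∧ c ≠ d ∧
    H.Adj a b ∧ H.Adj b c ∧ H.Adj c d ∧ H.Adj d a ∧
    (e = s(a, b) ∨ e = s(b, c) ∨ e = s(c, d) ∨ e = s(d, a)) ∧
    (f = s(a, b) ∨ f = s(b, c) ∨ f = s(c, d) ∨ f = s(d, a))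

/-- The equivalence relation on `E(H)` generated by lying in a common `C4`;
`C4Equiv H e f` says `f` lies in the `C4`-closure of `e`. -/
def C4Equiv (H : SimpleGraph W) : Sym2 W → Sym2 W → Prop :=
  Relation.EqvGen (InCommonC4 H)

/-- Two edges share an endpoint. -/
def Touch (e f : Sym2 V) : Prop := ∃ v, v ∈ e ∧ v ∈ f

/-- `[e]_φ`: the edge set of the connected component containing `e` of the
subgraph of `G` induced by the edge set `φ⁻¹(C4-closure of φ(e))`. -/
def PhiClass {G : SimpleGraph V} {H : SimpleGraph W} (φ : G →g H) (e : Sym2 V) :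
    Set (Sym2 V) :=
  {e' | Relation.ReflTransGen (fun a b =>
      a ∈ G.edgeSet ∧ b ∈ G.edgeSet ∧
      C4Equiv H (Sym2.map φ a) (Sym2.map φ e) ∧
      C4Equiv H (Sym2.map φ b) (Sym2.map φ e) ∧ Touch a b) e e'}

/-- `A ⊆ E(G)` is `φ`-stable if it is a union of classes `[e]_φ`. -/
def PhiStable {G : SimpleGraph V} {H : SimpleGraph W} (φ : G →g H)
    (A : Set (Sym2 V)) : Prop :=
  A ⊆ G.edgeSet ∧ ∀ e ∈ A, PhiClass φ e ⊆ A

/-- `A_u`: the edges of `A` having an endpoint in `φ⁻¹(u)`. -/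
def Au {G : SimpleGraph V} {H : SimpleGraph W} (φ : G →g H)
    (A : Set (Sym2 V)) (u : W) : Set (Sym2 V) :=
  {e ∈ A | ∃ v ∈ e, φ v = u}

open Classical in
/-- The intersection invariant `|F ∩ A| mod 2` of a multiset of edges. -/
noncomputable def inv2 (A : Set (Sym2 V)) (F : Multiset (Sym2 V)) : ℕ :=
  (F.filter (· ∈ A)).card % 2

/-- Concatenation of closed walks. -/
def catWalk (l l' : List V) : List V := l ++ l'.tail

/-- `n`-fold concatenation power of a closed walk based at `v0`. -/
def powWalk (v0 : V) (l : List V) : ℕ → List V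
  | 0 => [v0]
  | n + 1 => catWalk l (powWalk v0 l n)

/-- The discrete fundamental group `π₁(G)` is cyclic: some closed walk `P`
based at a vertex `v0` has the property that every closed walk based at `v0`
is homotopic to a power of `P` or of its reverse. -/
def CyclicPi1 (G : SimpleGraph V) : Prop :=
  G.Connected ∧ ∃ (v0 : V) (P : List V), IsClosedWalkAt G v0 P ∧
    ∀ Q : List V, IsClosedWalkAt G v0 Q →
      ∃ n : ℕ, Homotopic G Q (powWalk v0 P n) ∨ Homotopic G Q (powWalk v0 P.reverse n)

/-- `H` contains no cycle of length `n`. -/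
def CFree (H : SimpleGraph V) (n : ℕ) : Prop :=
  ∀ (v : V) (c : H.Walk v v), c.IsCycle → c.length ≠ n



private lemma inv2_four {A : Set (Sym2 V)} (e1 e2 e3 e4 : Sym2 V)
    (h : ((e1 ∈ A ↔ e2 ∈ A) ∧ (e3 ∈ A ↔ e4 ∈ A)) ∨
         ((e1 ∈ A ↔ e4 ∈ A) ∧ (e2 ∈ A ↔ e3 ∈ A))) :
    inv2 A ↑[e1, e2, e3, e4] = 0 := by
  classical
  show inv2 A (e1 ::ₘ e2 ::ₘ e3 ::ₘ e4 ::ₘ 0) = 0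
  by_cases h1 : e1 ∈ A <;> by_cases h2 : e2 ∈ A <;> by_cases h3 : e3 ∈ A <;>
    by_cases h4 : e4 ∈ A <;>
    simp_all [inv2, Multiset.filter_cons_of_pos, Multiset.filter_cons_of_neg,
      Multiset.filter_singleton]

private lemma mem_iff_step {G : SimpleGraph V} {H : SimpleGraph W} {φ : G →g H}
    {A : Set (Sym2 V)} (hA : PhiStable φ A) {e f : Sym2 V}
    (he : e ∈ G.edgeSet) (hf : f ∈ G.edgeSet)
    (hc : C4Equiv H (Sym2.map φ f) (Sym2.map φ e)) (ht : Touch e f) :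
    (e ∈ A ↔ f ∈ A) := by
  constructor
  · intro heA
    exact hA.2 e heA (Relation.ReflTransGen.single ⟨he, hf, Relation.EqvGen.refl _, hc, ht⟩)
  · intro hfA
    refine hA.2 f hfA (Relation.ReflTransGen.single
      ⟨hf, he, Relation.EqvGen.refl _, Relation.EqvGen.symm _ _ hc, ?_⟩)
    obtain ⟨v, hv1, hv2⟩ := ht
    exact ⟨v, hv2, hv1⟩

private lemma mem_Au_iff {G : SimpleGraph V} {H : SimpleGraph W} {φ : G →g H}
    {A : Set (Sym2 V)} {u : W} {x y : V} :
    s(x, y) ∈ Au φ A u ↔ (s(x, y) ∈ A ∧ (φ x = u ∨ φ y = u)) := by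
  constructor
  · rintro ⟨hA', v, hv, hvu⟩
    rcases Sym2.mem_iff.mp hv with rfl | rfl
    · exact ⟨hA', Or.inl hvu⟩
    · exact ⟨hA', Or.inr hvu⟩
  · rintro ⟨hA', h | h⟩
    · exact ⟨hA', x, by simp, h⟩
    · exact ⟨hA', y, by simp, h⟩

/-- The intersection invariants of a closed walk of length 4 vanish. -/
theorem inv_c4_eq_zero (G : SimpleGraph V) (H : SimpleGraph W) (φ : G →g H)
    (A : Set (Sym2 V)) (hA : PhiStable φ A)
    (v0 v1 v2 v3 : V) (h01 : G.Adj v0 v1) (h12 : G.Adj v1 v2)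
    (h23 : G.Adj v2 v3) (h30 : G.Adj v3 v0) :
    inv2 A (walkEdges [v0, v1, v2, v3, v0]) = 0 ∧
      ∀ u : W, inv2 (Au φ A u) (walkEdges [v0, v1, v2, v3, v0]) = 0 := by
  have he1 : s(v0, v1) ∈ G.edgeSet := G.mem_edgeSet.mpr h01
  have he2 : s(v1, v2) ∈ G.edgeSet := G.mem_edgeSet.mpr h12
  have he3 : s(v2, v3) ∈ G.edgeSet := G.mem_edgeSet.mpr h23
  have he4 : s(v3, v0) ∈ G.edgeSet := G.mem_edgeSet.mpr h30
  have t12 : Touch s(v0, v1) s(v1, v2) := ⟨v1, by simp, by simp⟩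
  have t23 : Touch s(v1, v2) s(v2, v3) := ⟨v2, by simp, by simp⟩
  have t34 : Touch s(v2, v3) s(v3, v0) := ⟨v3, by simp, by simp⟩
  have t14 : Touch s(v0, v1) s(v3, v0) := ⟨v0, by simp, by simp⟩
  have hW : walkEdges [v0, v1, v2, v3, v0] =
      (↑[s(v0, v1), s(v1, v2), s(v2, v3), s(v3, v0)] : Multiset (Sym2 V)) := rfl
  rw [hW]
  by_cases h02 : φ v0 = φ v2
  · -- φ v0 = φ v2 : pair (e1,e2) and (e3,e4)
    have hm12 : Sym2.map φ s(v1, v2) = Sym2.map φ s(v0, v1) := by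
      rw [Sym2.map_pair_eq, Sym2.map_pair_eq, ← h02, Sym2.eq_swap]
    have hm34 : Sym2.map φ s(v3, v0) = Sym2.map φ s(v2, v3) := by
      rw [Sym2.map_pair_eq, Sym2.map_pair_eq, h02, Sym2.eq_swap]
    have iff12 : s(v0, v1) ∈ A ↔ s(v1, v2) ∈ A :=
      mem_iff_step hA he1 he2 (hm12 ▸ Relation.EqvGen.refl _) t12
    have iff34 : s(v2, v3) ∈ A ↔ s(v3, v0) ∈ A :=
      mem_iff_step hA he3 he4 (hm34 ▸ Relation.EqvGen.refl _) t34
    refine ⟨inv2_four _ _ _ _ (Or.inl ⟨iff12, iff34⟩), fun u => ?_⟩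
    refine inv2_four _ _ _ _ (Or.inl ⟨?_, ?_⟩) <;>
      simp only [mem_Au_iff, h02] <;> tauto
  · by_cases h13 : φ v1 = φ v3
    · -- φ v1 = φ v3 : pair (e1,e4) and (e2,e3)
      have hm14 : Sym2.map φ s(v3, v0) = Sym2.map φ s(v0, v1) := by
        rw [Sym2.map_pair_eq, Sym2.map_pair_eq, ← h13, Sym2.eq_swap]
      have hm23 : Sym2.map φ s(v2, v3) = Sym2.map φ s(v1, v2) := by
        rw [Sym2.map_pair_eq, Sym2.map_pair_eq, ← h13, Sym2.eq_swap]
      have iff14 : s(v0, v1) ∈ A ↔ s(v3, v0) ∈ A :=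
        mem_iff_step hA he1 he4 (hm14 ▸ Relation.EqvGen.refl _) t14
      have iff23 : s(v1, v2) ∈ A ↔ s(v2, v3) ∈ A :=
        mem_iff_step hA he2 he3 (hm23 ▸ Relation.EqvGen.refl _) t23
      refine ⟨inv2_four _ _ _ _ (Or.inr ⟨iff14, iff23⟩), fun u => ?_⟩
      refine inv2_four _ _ _ _ (Or.inr ⟨?_, ?_⟩) <;>
        simp only [mem_Au_iff, h13] <;> tauto
    · -- all four images distinct : genuine C4 in H
      have hab : φ v0 ≠ φ v1 := (φ.map_adj h01).ne
      have hbc : φ v1 ≠ φ v2 := (φ.map_adj h12).ne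
      have hcd : φ v2 ≠ φ v3 := (φ.map_adj h23).ne
      have hda : φ v3 ≠ φ v0 := (φ.map_adj h30).ne
      have key : ∀ f g : Sym2 W,
          (f = s(φ v0, φ v1) ∨ f = s(φ v1, φ v2) ∨ f = s(φ v2, φ v3) ∨ f = s(φ v3, φ v0)) →
          (g = s(φ v0, φ v1) ∨ g = s(φ v1, φ v2) ∨ g = s(φ v2, φ v3) ∨ g = s(φ v3, φ v0)) →
          C4Equiv H f g := fun f g hf hg =>
        Relation.EqvGen.rel _ _ ⟨φ v0, φ v1, φ v2, φ v3, hab, h02, fun h => hda h.symm,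
          hbc, h13, hcd, φ.map_adj h01, φ.map_adj h12, φ.map_adj h23, φ.map_adj h30, hf, hg⟩
      have m1 : Sym2.map φ s(v0, v1) = s(φ v0, φ v1) := Sym2.map_pair_eq φ v0 v1
      have m2 : Sym2.map φ s(v1, v2) = s(φ v1, φ v2) := Sym2.map_pair_eq φ v1 v2
      have m3 : Sym2.map φ s(v2, v3) = s(φ v2, φ v3) := Sym2.map_pair_eq φ v2 v3
      have m4 : Sym2.map φ s(v3, v0) = s(φ v3, φ v0) := Sym2.map_pair_eq φ v3 v0
      have iff12 : s(v0, v1) ∈ A ↔ s(v1, v2) ∈ A :=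
        mem_iff_step hA he1 he2 (key _ _ (Or.inr (Or.inl m2)) (Or.inl m1)) t12
      have iff23 : s(v1, v2) ∈ A ↔ s(v2, v3) ∈ A :=
        mem_iff_step hA he2 he3 (key _ _ (Or.inr (Or.inr (Or.inl m3))) (Or.inr (Or.inl m2))) t23
      have iff34 : s(v2, v3) ∈ A ↔ s(v3, v0) ∈ A :=
        mem_iff_step hA he3 he4 (key _ _ (Or.inr (Or.inr (Or.inr m4))) (Or.inr (Or.inr (Or.inl m3)))) t34
      refine ⟨inv2_four _ _ _ _ (Or.inl ⟨iff12, iff34⟩), fun u => ?_⟩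
      have n01 : ¬(φ v0 = u ∧ φ v1 = u) := fun ⟨h, h'⟩ => hab (h.trans h'.symm)
      have n12 : ¬(φ v1 = u ∧ φ v2 = u) := fun ⟨h, h'⟩ => hbc (h.trans h'.symm)
      have n23 : ¬(φ v2 = u ∧ φ v3 = u) := fun ⟨h, h'⟩ => hcd (h.trans h'.symm)
      have n30 : ¬(φ v3 = u ∧ φ v0 = u) := fun ⟨h, h'⟩ => hda (h.trans h'.symm)
      have n02 : ¬(φ v0 = u ∧ φ v2 = u) := fun ⟨h, h'⟩ => h02 (h.trans h'.symm)
      have n13 : ¬(φ v1 = u ∧ φ v3 = u) := fun ⟨h, h'⟩ => h13 (h.trans h'.symm)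
      clear key m1 m2 m3 m4 he1 he2 he3 he4 t12 t23 t34 t14 hW h01 h12 h23 h30 hA hab hbc hcd hda h02 h13
      by_cases hx : φ v0 = u ∨ φ v2 = u
      · have hb : φ v1 ≠ u := fun h => hx.elim (fun h' => n01 ⟨h', h⟩) (fun h' => n12 ⟨h, h'⟩)
        have hd : φ v3 ≠ u := fun h => hx.elim (fun h' => n30 ⟨h, h'⟩) (fun h' => n23 ⟨h', h⟩)
        refine inv2_four _ _ _ _ (Or.inr ⟨?_, ?_⟩) <;>
          simp only [mem_Au_iff, hb, hd, or_false, false_or]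
        · exact and_congr_left' (iff12.trans (iff23.trans iff34))
        · exact and_congr_left' iff23
      · push_neg at hx
        refine inv2_four _ _ _ _ (Or.inl ⟨?_, ?_⟩) <;>
          simp only [mem_Au_iff, hx.1, hx.2, or_false, false_or]
        · exact and_congr_left' iff12
        · exact and_congr_left' iff34


end Discrete
end

section
/- Let H be a graph and C a shortest odd cycle in H. Let X, Y ⊆ E(H) be Eulerian edge sets (every vertex has even degree in the induced subgraph) with |X| ≡ |Y| (mod 2). Writing X_1 = X \ E(C), X_2 = X ∩ E(C), Y_1 = Y \ E(C), Y_2 = Y ∩ E(C), we have |Y| ≤ |X| + 2|Y_1 \ X_1|. -/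
/-- An edge set is Eulerian if every vertex has even degree in the subgraph it
induces. -/
def EulerianEdges {V : Type*} [DecidableEq V] (H : SimpleGraph V)
    (E : Finset (Sym2 V)) : Prop :=
  ↑E ⊆ H.edgeSet ∧ ∀ v : V, Even (E.filter (fun e => v ∈ e)).card


section Helpers
open Finset SimpleGraph

variable {V : Type*} [DecidableEq V] {H : SimpleGraph V}

lemma myfilter_sdiff {α : Type*} [DecidableEq α] (s t : Finset α) (p : α → Prop)
    [DecidablePred p] : (s \ t).filter p = s.filter p \ t.filter p := by
  ext e; simp only [mem_filter, mem_sdiff]; tauto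

lemma card_sd {α : Type*} [DecidableEq α] (A B : Finset α) :
    ((A \ B) ∪ (B \ A)).card + 2 * (A ∩ B).card = A.card + B.card := by
  rw [card_union_of_disjoint disjoint_sdiff_sdiff]
  have h1 := card_sdiff_add_card_inter A B
  have h2 := card_sdiff_add_card_inter B A
  rw [inter_comm] at h2
  omega

lemma card_filter_toFinset {α : Type*} [DecidableEq α] {l : List α} (h : l.Nodup)
    (P : α → Prop) [DecidablePred P] :
    (l.toFinset.filter P).card = l.countP (fun e => decide (P e)) := by
  have : l.toFinset.filter P = (l.filter (fun e => decide (P e))).toFinset := by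
    ext e; simp [List.mem_filter]
  rw [this, List.toFinset_card_of_nodup (h.filter _), List.countP_eq_length_filter]

lemma closed_trail_even {w : V} {p : H.Walk w w} (hp : p.IsTrail) (x : V) :
    Even ((p.edges.toFinset.filter (fun e => x ∈ e)).card) := by
  rw [card_filter_toFinset hp.edges_nodup]
  exact (hp.even_countP_edges_iff x).mpr (by simp)

-- cycle existence
lemma exists_cycle_in (D : Finset (Sym2 V)) (hD : EulerianEdges H D) (hne : D.Nonempty) :
    ∃ (w : V) (p : H.Walk w w), p.IsCycle ∧ ∀ e ∈ p.edges, e ∈ D := by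
  classical
  obtain ⟨e0, he0⟩ := hne
  set S : Set ℕ := {n | ∃ (a b : V) (p : H.Walk a b), p.IsPath ∧
    (∀ e ∈ p.edges, e ∈ D) ∧ p.length = n} with hS
  have hbdd : ∀ n ∈ S, n ≤ D.card := by
    rintro n ⟨a, b, p, hp, hpD, rfl⟩
    have hsub : p.edges.toFinset ⊆ D := fun e he => hpD e (List.mem_toFinset.mp he)
    calc p.length = p.edges.length := (p.length_edges).symm
      _ = p.edges.toFinset.card := (List.toFinset_card_of_nodup hp.isTrail.edges_nodup).symm
      _ ≤ D.card := Finset.card_le_card hsub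
  have h1S : 1 ∈ S := by
    induction e0 using Sym2.ind with
    | _ a b =>
      have hab : H.Adj a b := H.mem_edgeSet.mp (hD.1 he0)
      refine ⟨a, b, Walk.cons hab Walk.nil, ?_, ?_, rfl⟩
      · simp [Walk.cons_isPath_iff, hab.ne]
      · intro e he; simp at he; subst he; exact he0
  have hBdd : BddAbove S := ⟨D.card, fun n hn => hbdd n hn⟩
  have hmem : sSup S ∈ S := Nat.sSup_mem ⟨1, h1S⟩ hBdd
  have h1le : 1 ≤ sSup S := le_csSup hBdd h1S
  obtain ⟨a, b, p, hp, hpD, hlen⟩ := hmem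
  have hab : a ≠ b := by
    rintro rfl
    rw [(Walk.isPath_iff_eq_nil).mp hp] at hlen
    simp at hlen; omega
  -- odd count at a among p.edges
  have hodd : ¬ Even ((p.edges.toFinset.filter (fun e => a ∈ e)).card) := by
    rw [card_filter_toFinset hp.isTrail.edges_nodup]
    rw [hp.isTrail.even_countP_edges_iff a]
    simp [hab]
  have hsub : p.edges.toFinset.filter (fun e => a ∈ e) ⊆ D.filter (fun e => a ∈ e) :=
    Finset.filter_subset_filter _ (fun e he => hpD e (List.mem_toFinset.mp he))
  have hne' : p.edges.toFinset.filter (fun e => a ∈ e) ≠ D.filter (fun e => a ∈ e) := by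
    intro h; rw [h] at hodd; exact hodd (hD.2 a)
  obtain ⟨f, hf1, hf2⟩ := Finset.exists_of_ssubset (lt_of_le_of_ne hsub hne')
  rw [Finset.mem_filter] at hf1
  obtain ⟨hfD, hfa⟩ := hf1
  have hfnp : f ∉ p.edges := fun h => hf2 (Finset.mem_filter.mpr ⟨List.mem_toFinset.mpr h, hfa⟩)
  have hfH : f ∈ H.edgeSet := hD.1 hfD
  set x := Sym2.Mem.other hfa with hx
  have hfeq : s(a, x) = f := Sym2.other_spec hfa
  have hax : H.Adj a x := H.mem_edgeSet.mp (hfeq ▸ hfH)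
  by_cases hxs : x ∈ p.support
  · -- build cycle
    refine ⟨a, Walk.cons hax (p.takeUntil x hxs).reverse, ?_, ?_⟩
    · rw [Walk.cons_isCycle_iff]
      refine ⟨(hp.takeUntil hxs).reverse, fun h => hfnp ?_⟩
      rw [Walk.edges_reverse, List.mem_reverse] at h
      exact hfeq ▸ (Walk.edges_takeUntil_subset p hxs h)
    · intro e he
      rw [Walk.edges_cons] at he
      rcases List.mem_cons.mp he with rfl | h
      · exact hfeq ▸ hfD
      · rw [Walk.edges_reverse, List.mem_reverse] at h
        exact hpD e (Walk.edges_takeUntil_subset p hxs h)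
  · -- extend, contradiction
    exfalso
    have hmemS : p.length + 1 ∈ S := by
      refine ⟨x, b, Walk.cons hax.symm p, ?_, ?_, by simp⟩
      · rw [Walk.cons_isPath_iff]; exact ⟨hp, hxs⟩
      · intro e he
        rw [Walk.edges_cons] at he
        rcases List.mem_cons.mp he with rfl | h
        · rw [Sym2.eq_swap]; exact hfeq ▸ hfD
        · exact hpD e h
    have := le_csSup hBdd hmemS
    omega

lemma min_le_card {m : ℕ}
    (hm : ∀ (w : V) (d : H.Walk w w), d.IsCycle → Odd d.length → m ≤ d.length)
    (D : Finset (Sym2 V)) (hD : EulerianEdges H D) (hodd : Odd D.card) : m ≤ D.card := by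
  classical
  induction D using Finset.strongInduction with
  | _ D ih =>
  have hne : D.Nonempty := by
    rw [← Finset.card_pos]
    rcases hodd with ⟨k, hk⟩; omega
  obtain ⟨w, p, hcyc, hpD⟩ := exists_cycle_in D hD hne
  set K := p.edges.toFinset with hK
  have hKD : K ⊆ D := fun e he => hpD e (List.mem_toFinset.mp he)
  have hKcard : K.card = p.length := by
    rw [hK, List.toFinset_card_of_nodup hcyc.isTrail.edges_nodup, p.length_edges]
  by_cases hpl : Odd p.length
  · calc m ≤ p.length := hm w p hcyc hpl
      _ = K.card := hKcard.symm
      _ ≤ D.card := Finset.card_le_card hKD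
  · -- even cycle, remove it
    have hKne : K.Nonempty := by
      rw [← Finset.card_pos, hKcard]
      have := hcyc.three_le_length; omega
    have hss : D \ K ⊂ D := Finset.sdiff_ssubset hKD hKne
    have hDeq : ∀ v, (D.filter (fun e => v ∈ e)).card
        = ((D \ K).filter (fun e => v ∈ e)).card + (K.filter (fun e => v ∈ e)).card := by
      intro v
      rw [← Finset.card_union_of_disjoint]
      · congr 1
        rw [← Finset.filter_union, Finset.sdiff_union_of_subset hKD]
      · exact Finset.disjoint_filter_filter (Finset.sdiff_disjoint)
    have hD' : EulerianEdges H (D \ K) := by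
      refine ⟨fun e he => hD.1 (Finset.mem_coe.mpr (Finset.mem_sdiff.mp he).1), fun v => ?_⟩
      have h1 := hD.2 v
      have h2 := closed_trail_even hcyc.isTrail v
      rw [← hK] at h2
      rw [hDeq v] at h1
      rw [Nat.even_iff] at h1 h2 ⊢
      omega
    have hcard : (D \ K).card + K.card = D.card := by
      rw [Finset.card_sdiff_of_subset hKD]
      have := Finset.card_le_card hKD; omega
    have hodd' : Odd (D \ K).card := by
      rw [Nat.odd_iff] at hodd ⊢
      rw [Nat.not_odd_iff_even, Nat.even_iff] at hpl
      omega
    calc m ≤ (D \ K).card := ih _ hss hD' hodd'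
      _ ≤ D.card := Finset.card_le_card Finset.sdiff_subset

lemma euler_sd (A B : Finset (Sym2 V)) (hA : EulerianEdges H A) (hB : EulerianEdges H B) :
    EulerianEdges H ((A \ B) ∪ (B \ A)) := by
  constructor
  · intro e he
    simp only [coe_union, Set.mem_union, mem_coe, mem_sdiff] at he
    rcases he with ⟨h, _⟩ | ⟨h, _⟩
    exacts [hA.1 h, hB.1 h]
  · intro v
    rw [filter_union, myfilter_sdiff, myfilter_sdiff]
    have key := card_sd (A.filter (fun e => v ∈ e)) (B.filter (fun e => v ∈ e))
    have h1 := hA.2 v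
    have h2 := hB.2 v
    rw [Nat.even_iff] at h1 h2 ⊢
    omega


end Helpers

open Finset in
/-- If `C` is a shortest odd cycle of `H` and `X, Y` are Eulerian edge sets of
the same parity, then `|Y| ≤ |X| + 2|Y₁ \ X₁|` where `X₁ = X \ E(C)` and
`Y₁ = Y \ E(C)`. -/
theorem eulerian_card_le {V : Type*} [DecidableEq V] (H : SimpleGraph V)
    (v : V) (c : H.Walk v v) (hc : c.IsCycle) (hcodd : Odd c.length)
    (hmin : ∀ (w : V) (d : H.Walk w w), d.IsCycle → Odd d.length →
      c.length ≤ d.length)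
    (X Y : Finset (Sym2 V)) (hX : EulerianEdges H X) (hY : EulerianEdges H Y)
    (hpar : X.card % 2 = Y.card % 2) :
    Y.card ≤ X.card +
      2 * ((Y \ c.edges.toFinset) \ (X \ c.edges.toFinset)).card := by
  classical
  set C := c.edges.toFinset with hC
  have hCcard : C.card = c.length := by
    rw [hC, List.toFinset_card_of_nodup hc.isTrail.edges_nodup, c.length_edges]
  have hCE : EulerianEdges H C :=
    ⟨fun e he => c.edges_subset_edgeSet (List.mem_toFinset.mp he),
     closed_trail_even hc.isTrail⟩
  set D := (X \ Y) ∪ (Y \ X) with hD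
  have hDE : EulerianEdges H D := euler_sd X Y hX hY
  set D' := (D \ C) ∪ (C \ D) with hD'
  have hD'E : EulerianEdges H D' := euler_sd D C hDE hCE
  have hDcard := card_sd X Y
  rw [← hD] at hDcard
  have hD'card := card_sd D C
  rw [← hD'] at hD'card
  have hD'odd : Odd D'.card := by
    rw [Nat.odd_iff]
    rw [Nat.odd_iff] at hcodd
    omega
  have hmain : c.length ≤ D'.card := min_le_card hmin D' hD'E hD'odd
  -- finset identities
  have hDsdC : D \ C = ((X \ C) \ (Y \ C)) ∪ ((Y \ C) \ (X \ C)) := by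
    ext e
    simp only [hD, mem_union, mem_sdiff]
    tauto
  have hsub1 : (Y ∩ C) \ (X ∩ C) ⊆ D ∩ C := by
    intro e he
    simp only [mem_sdiff, mem_inter, mem_union, hD] at he ⊢
    tauto
  -- cardinal bookkeeping
  have e1 := card_sdiff_add_card_inter X C
  have e2 := card_sdiff_add_card_inter Y C
  have e3 := card_sdiff_add_card_inter D C
  have e4 := card_sdiff_add_card_inter C D
  have e5 : (C ∩ D).card = (D ∩ C).card := by rw [inter_comm]
  have e6 : D'.card = (D \ C).card + (C \ D).card :=
    card_union_of_disjoint disjoint_sdiff_sdiff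
  have e7 : (D \ C).card = ((X \ C) \ (Y \ C)).card + ((Y \ C) \ (X \ C)).card := by
    rw [hDsdC]; exact card_union_of_disjoint disjoint_sdiff_sdiff
  have e8 := card_sdiff_add_card_inter (X \ C) (Y \ C)
  have e9 := card_sdiff_add_card_inter (Y \ C) (X \ C)
  have e10 : ((X \ C) ∩ (Y \ C)).card = ((Y \ C) ∩ (X \ C)).card := by rw [inter_comm]
  have e11 := card_sdiff_add_card_inter (Y ∩ C) (X ∩ C)
  have e12 : ((Y ∩ C) ∩ (X ∩ C)).card ≤ (X ∩ C).card :=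
    card_le_card (inter_subset_right)
  have e13 : ((Y ∩ C) \ (X ∩ C)).card ≤ (D ∩ C).card := card_le_card hsub1
  omega
end

section
/- Let H be a graph and C a shortest odd cycle of H. If X and Y are odd cycles in H, and X_1 = E(X) \ E(C), Y_1 = E(Y) \ E(C), then |Y| ≤ |X| + 2|Y_1 \ X_1|, where |X| and |Y| denote the lengths of the cycles. -/
open SimpleGraph

private lemma list_card_filter_toFinset {α : Type*} [DecidableEq α] {l : List α}
    (h : l.Nodup) (p : α → Prop) [DecidablePred p] :
    (l.toFinset.filter p).card = l.countP (fun a => decide (p a)) := by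
  have h2 : l.toFinset.filter p = (l.filter (fun a => decide (p a))).toFinset := by
    ext a; simp [List.mem_filter]
  rw [h2, List.card_toFinset, List.Nodup.dedup (List.Nodup.filter _ h),
    List.countP_eq_length_filter]

private lemma exists_odd_cycle_aux {V : Type*} {H : SimpleGraph V} :
    ∀ n : ℕ, ∀ (u : V) (p : H.Walk u u), p.length = n → Odd n →
      ∃ (z : V) (q : H.Walk z z), q.IsCycle ∧ Odd q.length ∧ q.length ≤ n := by
  intro n
  induction n using Nat.strong_induction_on with
  | _ n ih =>
  intro u p hl hodd
  classical
  have hn0 : n ≠ 0 := by rintro rfl; obtain ⟨k, hk⟩ := hodd; omega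
  have hnnil : ¬ p.Nil := by rw [Walk.nil_iff_length_eq, hl]; exact hn0
  obtain ⟨v, hadj, q, rfl⟩ := Walk.not_nil_iff.mp hnnil
  by_cases hnd : (Walk.cons hadj q).support.tail.Nodup
  · have hq : q.IsPath := by
      rw [Walk.isPath_def]; simpa [Walk.support_cons] using hnd
    by_cases he : s(u, v) ∈ q.edges
    · -- reverse trick: the first edge is repeated as last edge of q
      have hql : q.length ≠ 0 := by
        intro h0
        have he' : q.edges = [] := List.length_eq_zero_iff.mp (by rw [Walk.length_edges, h0])
        rw [he'] at he; exact List.not_mem_nil he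
      have hqrnil : ¬ q.reverse.Nil := by
        rw [Walk.nil_iff_length_eq, Walk.length_reverse]; exact hql
      obtain ⟨w, hadj', r, hqr⟩ := Walk.not_nil_iff.mp hqrnil
      have hmem : s(u, v) ∈ q.reverse.edges := by
        rw [Walk.edges_reverse, List.mem_reverse]; exact he
      rw [hqr, Walk.edges_cons] at hmem
      rcases List.mem_cons.mp hmem with h1 | h1
      · have hwv : v = w := Sym2.congr_right.mp h1
        subst hwv
        have hrl : r.length = n - 2 := by
          have h2 : q.reverse.length = q.length := Walk.length_reverse q
          rw [hqr, Walk.length_cons] at h2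
          have h3 : q.length + 1 = n := by rw [← hl, Walk.length_cons]
          omega
        obtain ⟨k, hk⟩ := hodd
        have hk1 : 1 ≤ k := by
          have h3 : q.length + 1 = n := by rw [← hl, Walk.length_cons]
          omega
        obtain ⟨z, s, hc1, hc2, hc3⟩ := ih (n - 2) (by omega) v r hrl ⟨k - 1, by omega⟩
        exact ⟨z, s, hc1, hc2, by omega⟩
      · exfalso
        have hu : u ∈ r.support := Walk.fst_mem_support_of_mem_edges r h1
        have hrev : q.reverse.IsPath := hq.reverse
        rw [hqr, Walk.isPath_def, Walk.support_cons] at hrev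
        exact (List.nodup_cons.mp hrev).1 hu
    · exact ⟨u, Walk.cons hadj q, (Walk.cons_isCycle_iff q hadj).mpr ⟨hq, he⟩, hl ▸ hodd, le_of_eq hl⟩
  · obtain ⟨z, hzdup⟩ := List.exists_duplicate_iff_not_nodup.mpr hnd
    have hcount : 2 ≤ ((Walk.cons hadj q).support.tail.count z) :=
      List.duplicate_iff_two_le_count.mp hzdup
    have hzs : z ∈ (Walk.cons hadj q).support := List.mem_of_mem_tail hzdup.mem
    set P := (Walk.cons hadj q).rotate z hzs with hP
    have hPlen : P.length = n := by
      have hd := (Walk.rotate_darts (Walk.cons hadj q) z hzs).perm.length_eq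
      rwa [Walk.length_darts, Walk.length_darts, hl] at hd
    have hPcnt : 2 ≤ P.support.tail.count z := by
      rw [hP, List.Perm.count_eq ((Walk.support_rotate (Walk.cons hadj q) z hzs).perm)]
      exact hcount
    have hPnil : ¬ P.Nil := by rw [Walk.nil_iff_length_eq, hPlen]; exact hn0
    obtain ⟨w, hadj', r, hPr⟩ := Walk.not_nil_iff.mp hPnil
    have hcnt' : 2 ≤ r.support.count z := by
      rw [hPr, Walk.support_cons] at hPcnt; simpa using hPcnt
    have hzr : z ∈ r.support := by
      rw [← List.count_pos_iff]; omega
    have hspec := r.take_spec hzr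
    have hlen12 : (r.takeUntil z hzr).length + (r.dropUntil z hzr).length = r.length := by
      have := congrArg Walk.length hspec
      rwa [Walk.length_append] at this
    have hc1 : (r.takeUntil z hzr).support.count z = 1 :=
      r.count_support_takeUntil_eq_one hzr
    have hc2 : 1 ≤ (r.dropUntil z hzr).support.tail.count z := by
      have hsupp := congrArg (List.count z) (congrArg Walk.support hspec)
      rw [Walk.support_append, List.count_append, hc1] at hsupp
      omega
    have hr2pos : 1 ≤ (r.dropUntil z hzr).length := by
      by_contra hcon
      have h0 : (r.dropUntil z hzr).length = 0 := by omega
      rw [Walk.nil_iff_support_eq.mp (Walk.length_eq_zero_iff.mp h0)] at hc2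
      simp at hc2
    have hrn : r.length + 1 = n := by
      rw [← hPlen, hPr, Walk.length_cons]
    rw [Nat.odd_iff] at hodd
    by_cases hodd1 : Odd ((r.takeUntil z hzr).length + 1)
    · obtain ⟨zz, s, h1, h2, h3⟩ := ih ((r.takeUntil z hzr).length + 1) (by omega) z
        (Walk.cons hadj' (r.takeUntil z hzr)) (by rw [Walk.length_cons]) hodd1
      exact ⟨zz, s, h1, h2, by omega⟩
    · rw [Nat.odd_iff] at hodd1
      have hodd2 : Odd (r.dropUntil z hzr).length := by rw [Nat.odd_iff]; omega
      obtain ⟨zz, s, h1, h2, h3⟩ := ih ((r.dropUntil z hzr).length)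
        (by omega) z (r.dropUntil z hzr) rfl hodd2
      exact ⟨zz, s, h1, h2, by omega⟩

private lemma exists_odd_closed_trail {V : Type*} [DecidableEq V] {H : SimpleGraph V} :
    ∀ n (S : Finset (Sym2 V)), S.card = n → (∀ e ∈ S, e ∈ H.edgeSet) →
      (∀ v : V, Even ((S.filter (fun e => v ∈ e)).card)) → Odd n →
      ∃ (u : V) (p : H.Walk u u), p.IsTrail ∧ Odd p.length ∧ ∀ e ∈ p.edges, e ∈ S := by
  intro n
  induction n using Nat.strong_induction_on with
  | _ n ih =>
  intro S hcard hsub heven hodd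
  classical
  have hn1 : 1 ≤ n := by obtain ⟨k, hk⟩ := hodd; omega
  have hS0 : S.Nonempty := by rw [← Finset.card_pos, hcard]; omega
  obtain ⟨e₀, he₀⟩ := hS0
  obtain ⟨⟨u₀, v₀⟩, rfl⟩ := e₀.exists_rep
  have hadj₀ : H.Adj u₀ v₀ := (H.mem_edgeSet).mp (hsub _ he₀)
  let Q : ℕ → Prop := fun k =>
    ∃ (w : V) (q : H.Walk u₀ w), q.IsTrail ∧ (∀ e ∈ q.edges, e ∈ S) ∧ q.length = k
  have hQ1 : Q 1 := by
    refine ⟨v₀, Walk.cons hadj₀ Walk.nil, ?_, ?_, by simp⟩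
    · simp [Walk.isTrail_def]
    · intro e he
      simp only [Walk.edges_cons, Walk.edges_nil, List.mem_singleton] at he
      subst he; exact he₀
  have hbound : ∀ k, Q k → k ≤ n := by
    rintro k ⟨w, q, hqt, hqS, rfl⟩
    calc q.length = q.edges.toFinset.card := by
          rw [List.card_toFinset, List.Nodup.dedup hqt.edges_nodup, Walk.length_edges]
      _ ≤ S.card := Finset.card_le_card
          (fun e he => hqS e (List.mem_toFinset.mp he))
      _ = n := hcard
  set L := Nat.findGreatest Q n with hL
  have hL1 : 1 ≤ L := Nat.le_findGreatest hn1 hQ1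
  obtain ⟨w, q, hqt, hqS, hqlen⟩ : Q L := Nat.findGreatest_spec hn1 hQ1
  have hw : w = u₀ := by
    by_contra hne
    have hoddw : ¬ Even (q.edges.countP fun e => w ∈ e) := by
      intro hcontra
      exact ((hqt.even_countP_edges_iff w).mp hcontra (Ne.symm hne)).2 rfl
    have hsubw : q.edges.toFinset.filter (fun e => w ∈ e) ⊆ S.filter (fun e => w ∈ e) :=
      Finset.filter_subset_filter _ (fun e he => hqS e (List.mem_toFinset.mp he))
    have h1 : (q.edges.toFinset.filter (fun e => w ∈ e)).card
        = q.edges.countP (fun e => w ∈ e) :=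
      list_card_filter_toFinset hqt.edges_nodup _
    have hlt : (q.edges.toFinset.filter (fun e => w ∈ e)).card
        < (S.filter (fun e => w ∈ e)).card := by
      rcases (Finset.card_le_card hsubw).lt_or_eq with h | h
      · exact h
      · exfalso; apply hoddw; rw [← h1, h]; exact heven w
    have hne2 : q.edges.toFinset.filter (fun e => w ∈ e) ≠ S.filter (fun e => w ∈ e) := by
      intro hEq; rw [hEq] at hlt; exact lt_irrefl _ hlt
    obtain ⟨e, heS, henq⟩ := Finset.exists_of_ssubset (lt_of_le_of_ne hsubw hne2)
    rw [Finset.mem_filter] at heS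
    have hwe : w ∈ e := heS.2
    obtain ⟨w', rfl⟩ := Sym2.mem_iff_exists.mp hwe
    have henq' : s(w, w') ∉ q.edges := by
      intro hmem
      exact henq (Finset.mem_filter.mpr ⟨List.mem_toFinset.mpr hmem, heS.2⟩)
    have hadj' : H.Adj w w' := (H.mem_edgeSet).mp (hsub _ heS.1)
    have hQL1 : Q (L + 1) := by
      refine ⟨w', q.append (Walk.cons hadj' Walk.nil), ?_, ?_, ?_⟩
      · rw [Walk.isTrail_def, Walk.edges_append]
        simp only [Walk.edges_cons, Walk.edges_nil]
        rw [List.nodup_append]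
        exact ⟨hqt.edges_nodup, List.nodup_singleton _,
          by intro a ha b hb; rw [List.mem_singleton] at hb; subst hb; rintro rfl; exact henq' ha⟩
      · intro e he
        rw [Walk.edges_append] at he
        rcases List.mem_append.mp he with h | h
        · exact hqS e h
        · simp only [Walk.edges_cons, Walk.edges_nil, List.mem_singleton] at h
          subst h; exact heS.1
      · rw [Walk.length_append, hqlen]; simp
    have := Nat.le_findGreatest (hbound (L + 1) hQL1) hQL1
    omega
  subst hw
  by_cases hLodd : Odd L
  · exact ⟨_, q, hqt, by rwa [hqlen], hqS⟩
  · have hqfin : q.edges.toFinset ⊆ S := fun e he => hqS e (List.mem_toFinset.mp he)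
    have hqcard : q.edges.toFinset.card = L := by
      rw [List.card_toFinset, List.Nodup.dedup hqt.edges_nodup, Walk.length_edges, hqlen]
    have hLn : L ≤ n := hbound L ⟨_, q, hqt, hqS, hqlen⟩
    have hS'card : (S \ q.edges.toFinset).card = n - L := by
      rw [Finset.card_sdiff_of_subset hqfin, hcard, hqcard]
    rw [Nat.odd_iff] at hodd; rw [Nat.not_odd_iff_even, Nat.even_iff] at hLodd
    have hodd' : Odd (n - L) := by rw [Nat.odd_iff]; omega
    have heven' : ∀ v : V, Even (((S \ q.edges.toFinset).filter (fun e => v ∈ e)).card) := by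
      intro v
      have hfil : (S \ q.edges.toFinset).filter (fun e => v ∈ e)
          = S.filter (fun e => v ∈ e) \ q.edges.toFinset.filter (fun e => v ∈ e) := by
        ext e
        simp only [Finset.mem_filter, Finset.mem_sdiff]
        tauto
      rw [hfil, Finset.card_sdiff_of_subset (Finset.filter_subset_filter _ hqfin)]
      have h1 := heven v
      have h2 : Even ((q.edges.toFinset.filter (fun e => v ∈ e)).card) := by
        rw [list_card_filter_toFinset hqt.edges_nodup]
        exact (hqt.even_countP_edges_iff v).mpr (fun h => absurd rfl h)
      have hle := Finset.card_le_card
        (Finset.filter_subset_filter (fun e => v ∈ e) hqfin)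
      rw [Nat.even_iff] at h1 h2 ⊢
      omega
    obtain ⟨u, p, h1, h2, h3⟩ := ih (n - L) (by omega) (S \ q.edges.toFinset) hS'card
      (fun e he => hsub e (Finset.mem_sdiff.mp he).1) heven' hodd'
    exact ⟨u, p, h1, h2, fun e he => (Finset.mem_sdiff.mp (h3 e he)).1⟩

/-- If `C` is a shortest odd cycle of `H` and `X, Y` are odd cycles of `H`,
then `|Y| ≤ |X| + 2|Y₁ \ X₁|` where `X₁ = E(X) \ E(C)`, `Y₁ = E(Y) \ E(C)`. -/
theorem odd_cycle_length_le {V : Type*} [DecidableEq V] (H : SimpleGraph V)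
    (v : V) (c : H.Walk v v) (hc : c.IsCycle) (hcodd : Odd c.length)
    (hmin : ∀ (w : V) (d : H.Walk w w), d.IsCycle → Odd d.length →
      c.length ≤ d.length)
    (a b : V) (x : H.Walk a a) (y : H.Walk b b)
    (hx : x.IsCycle) (hxodd : Odd x.length)
    (hy : y.IsCycle) (hyodd : Odd y.length) :
    y.length ≤ x.length +
      2 * ((y.edges.toFinset \ c.edges.toFinset) \
            (x.edges.toFinset \ c.edges.toFinset)).card := by
  classical
  set A := c.edges.toFinset with hA
  set B := x.edges.toFinset with hB
  set D := y.edges.toFinset with hD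
  have hcA : A.card = c.length := by
    rw [hA, List.card_toFinset, List.Nodup.dedup hc.isCircuit.isTrail.edges_nodup,
      Walk.length_edges]
  have hcB : B.card = x.length := by
    rw [hB, List.card_toFinset, List.Nodup.dedup hx.isCircuit.isTrail.edges_nodup,
      Walk.length_edges]
  have hcD : D.card = y.length := by
    rw [hD, List.card_toFinset, List.Nodup.dedup hy.isCircuit.isTrail.edges_nodup,
      Walk.length_edges]
  have hsymm : ∀ (P Q : Finset (Sym2 V)),
      (P \ Q ∪ Q \ P).card + 2 * (P ∩ Q).card = P.card + Q.card := by
    intro P Q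
    have h1 : (P \ Q ∪ Q \ P).card = (P \ Q).card + (Q \ P).card :=
      Finset.card_union_of_disjoint disjoint_sdiff_sdiff
    have h2 := Finset.card_sdiff_add_card_inter P Q
    have h3 := Finset.card_sdiff_add_card_inter Q P
    rw [Finset.inter_comm] at h3
    omega
  set U : Finset (Sym2 V) := A \ B ∪ B \ A with hU
  set S : Finset (Sym2 V) := U \ D ∪ D \ U with hS
  -- S consists of edges of H
  have hsubS : ∀ e ∈ S, e ∈ H.edgeSet := by
    intro e he
    have hmem : e ∈ A ∨ e ∈ B ∨ e ∈ D := by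
      rw [hS, hU] at he
      simp only [Finset.mem_union, Finset.mem_sdiff] at he
      tauto
    rcases hmem with h | h | h
    · exact c.edges_subset_edgeSet (List.mem_toFinset.mp h)
    · exact x.edges_subset_edgeSet (List.mem_toFinset.mp h)
    · exact y.edges_subset_edgeSet (List.mem_toFinset.mp h)
  -- parity of incidence in S
  have heven : ∀ w : V, Even ((S.filter (fun e => w ∈ e)).card) := by
    intro w
    have hfd : ∀ (P Q : Finset (Sym2 V)),
        (P \ Q).filter (fun e => w ∈ e) = P.filter (fun e => w ∈ e) \ Q.filter (fun e => w ∈ e) := by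
      intro P Q; ext e
      simp only [Finset.mem_filter, Finset.mem_sdiff]
      tauto
    have hSfil : S.filter (fun e => w ∈ e) =
        (U.filter (fun e => w ∈ e) \ D.filter (fun e => w ∈ e)) ∪
        (D.filter (fun e => w ∈ e) \ U.filter (fun e => w ∈ e)) := by
      rw [hS, Finset.filter_union, hfd, hfd]
    have hUfil : U.filter (fun e => w ∈ e) =
        (A.filter (fun e => w ∈ e) \ B.filter (fun e => w ∈ e)) ∪
        (B.filter (fun e => w ∈ e) \ A.filter (fun e => w ∈ e)) := by
      rw [hU, Finset.filter_union, hfd, hfd]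
    have hevA : Even ((A.filter (fun e => w ∈ e)).card) := by
      rw [hA, list_card_filter_toFinset hc.isCircuit.isTrail.edges_nodup]
      exact (hc.isCircuit.isTrail.even_countP_edges_iff w).mpr (fun h => absurd rfl h)
    have hevB : Even ((B.filter (fun e => w ∈ e)).card) := by
      rw [hB, list_card_filter_toFinset hx.isCircuit.isTrail.edges_nodup]
      exact (hx.isCircuit.isTrail.even_countP_edges_iff w).mpr (fun h => absurd rfl h)
    have hevD : Even ((D.filter (fun e => w ∈ e)).card) := by
      rw [hD, list_card_filter_toFinset hy.isCircuit.isTrail.edges_nodup]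
      exact (hy.isCircuit.isTrail.even_countP_edges_iff w).mpr (fun h => absurd rfl h)
    have h1 := hsymm (U.filter (fun e => w ∈ e)) (D.filter (fun e => w ∈ e))
    have h2 := hsymm (A.filter (fun e => w ∈ e)) (B.filter (fun e => w ∈ e))
    rw [← hUfil] at h2
    rw [← hSfil] at h1
    rw [Nat.even_iff] at hevA hevB hevD ⊢
    omega
  -- S has an odd number of edges
  have hoddS : Odd S.card := by
    have h1 := hsymm U D
    have h2 := hsymm A B
    rw [← hU] at h2
    rw [← hS] at h1
    rw [Nat.odd_iff] at hcodd hxodd hyodd ⊢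
    rw [hcA] at *
    omega
  -- extract an odd cycle inside S
  have hkey : c.length ≤ S.card := by
    obtain ⟨u, T, hTt, hTodd, hTS⟩ := exists_odd_closed_trail S.card S rfl hsubS heven hoddS
    obtain ⟨z, q, hqc, hqodd, hqle⟩ := exists_odd_cycle_aux T.length u T rfl hTodd
    have hTle : T.length ≤ S.card := by
      calc T.length = T.edges.toFinset.card := by
            rw [List.card_toFinset, List.Nodup.dedup hTt.edges_nodup, Walk.length_edges]
        _ ≤ S.card := Finset.card_le_card (fun e he => hTS e (List.mem_toFinset.mp he))
    exact le_trans (le_trans (hmin z q hqc hqodd) hqle) hTle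
  -- region counting
  have hext : ∀ {s t : Finset (Sym2 V)}, s = t → s.card = t.card := fun h => by rw [h]
  have r1 : A.card = ((A\B)\D).card + ((A∩D)\B).card + ((A∩B)\D).card + ((A∩B)∩D).card := by
    have e1 : (A\B)∩D = (A∩D)\B := by ext e; simp only [Finset.mem_inter, Finset.mem_sdiff]; tauto
    have h1 := Finset.card_sdiff_add_card_inter A B
    have h2 := Finset.card_sdiff_add_card_inter (A\B) D
    have h3 := Finset.card_sdiff_add_card_inter (A∩B) D
    rw [hext e1] at h2
    omega
  have r2 : B.card = ((B\A)\D).card + ((B∩D)\A).card + ((A∩B)\D).card + ((A∩B)∩D).card := by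
    have e1 : (B\A)∩D = (B∩D)\A := by ext e; simp only [Finset.mem_inter, Finset.mem_sdiff]; tauto
    have e2 : (B∩A)\D = (A∩B)\D := by rw [Finset.inter_comm]
    have e3 : (B∩A)∩D = (A∩B)∩D := by rw [Finset.inter_comm B A]
    have h1 := Finset.card_sdiff_add_card_inter B A
    have h2 := Finset.card_sdiff_add_card_inter (B\A) D
    have h3 := Finset.card_sdiff_add_card_inter (B∩A) D
    rw [hext e1] at h2
    rw [hext e2, hext e3] at h3
    omega
  have r3 : D.card = ((D\A)\B).card + ((B∩D)\A).card + ((A∩D)\B).card + ((A∩B)∩D).card := by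
    have e1 : (D\A)∩B = (B∩D)\A := by ext e; simp only [Finset.mem_inter, Finset.mem_sdiff]; tauto
    have e2 : (D∩A)\B = (A∩D)\B := by rw [Finset.inter_comm]
    have e3 : (D∩A)∩B = (A∩B)∩D := by
      ext e; simp only [Finset.mem_inter]; tauto
    have h1 := Finset.card_sdiff_add_card_inter D A
    have h2 := Finset.card_sdiff_add_card_inter (D\A) B
    have h3 := Finset.card_sdiff_add_card_inter (D∩A) B
    rw [hext e1] at h2
    rw [hext e2, hext e3] at h3
    omega
  have r4 : S.card = ((A\B)\D).card + ((B\A)\D).card + ((D\A)\B).card + ((A∩B)∩D).card := by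
    have h1 : S.card = (U\D).card + (D\U).card := by
      rw [hS]
      exact Finset.card_union_of_disjoint disjoint_sdiff_sdiff
    have e1 : U\D = ((A\B)\D) ∪ ((B\A)\D) := by
      rw [hU]; ext e
      simp only [Finset.mem_union, Finset.mem_sdiff]
      tauto
    have e2 : D\U = ((D\A)\B) ∪ ((A∩B)∩D) := by
      rw [hU]; ext e
      simp only [Finset.mem_union, Finset.mem_sdiff, Finset.mem_inter]
      tauto
    have d1 : Disjoint ((A\B)\D) ((B\A)\D) := by
      rw [Finset.disjoint_left]
      intro e he1 he2
      simp only [Finset.mem_sdiff] at he1 he2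
      tauto
    have d2 : Disjoint ((D\A)\B) ((A∩B)∩D) := by
      rw [Finset.disjoint_left]
      intro e he1 he2
      simp only [Finset.mem_sdiff, Finset.mem_inter] at he1 he2
      tauto
    rw [h1, hext e1, hext e2, Finset.card_union_of_disjoint d1,
      Finset.card_union_of_disjoint d2]
    omega
  have r5 : ((D \ A) \ (B \ A)).card = ((D\A)\B).card := by
    apply hext
    ext e
    simp only [Finset.mem_sdiff]
    tauto
  rw [← hcD, ← hcB, r5]
  rw [← hcA] at hkey
  omega
end

section
/- Fix r ≥ 1. Let H be a graph containing no cycle of length 2r+1, let v be a vertex of H, and let J be a connected nonempty subgraph of H whose vertex set is contained in the set N_s(v) of vertices at distance exactly s from v, for some s ≤ r. Then J has a vertex of degree less than 2r. -/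
/-- `H` contains no cycle of length `n`. -/
def CFree {V : Type*} (H : SimpleGraph V) (n : ℕ) : Prop :=
  ∀ (v : V) (c : H.Walk v v), c.IsCycle → c.length ≠ n

namespace CFreeAux

open SimpleGraph

variable {V : Type*}

/-- Build a walk from a chain'-list of adjacent vertices. -/
lemma exists_walk_of_chain (H : SimpleGraph V) :
    ∀ (l : List V) (x y : V), l.head? = some x → l.getLast? = some y →
      l.IsChain H.Adj → ∃ W : H.Walk x y, W.support = l := by
  intro l
  induction l with
  | nil => simp
  | cons z t ih =>
    intro x y hx hy hc
    simp only [List.head?_cons, Option.some.injEq] at hx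
    subst hx
    cases t with
    | nil =>
      simp only [List.getLast?_singleton, Option.some.injEq] at hy
      subst hy
      exact ⟨Walk.nil, rfl⟩
    | cons z' t' =>
      rw [List.isChain_cons_cons] at hc
      have hy' : (z' :: t').getLast? = some y := by
        rwa [List.getLast?_cons_cons] at hy
      obtain ⟨W, hW⟩ := ih z' y rfl hy' hc.2
      exact ⟨Walk.cons hc.1 W, by simp [hW]⟩

/-- A closed walk `cons` decomposition helper: the closing edge cannot occur in a
path of length ≥ 2 from `x` to `a`. -/
lemma no_closing_edge {H : SimpleGraph V} {x a : V} (W : H.Walk x a)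
    (hn : W.support.Nodup) (hlen : 2 ≤ W.length) (he : s(a, x) ∈ W.edges) : False := by
  cases W with
  | nil => simp at he
  | @cons _ x2 _ h2 Q =>
    simp only [Walk.edges_cons, List.mem_cons] at he
    rcases he with he | he
    · rw [Sym2.eq_iff] at he
      rcases he with ⟨rfl, rfl⟩ | ⟨rfl, -⟩
      · exact H.irrefl h2
      · -- now Q : H.Walk x2 a with a = x2
        cases Q with
        | nil => simp at hlen
        | cons h3 Q' =>
          simp only [Walk.support_cons, List.nodup_cons] at hn
          exact hn.2.1 (by simpa using Q'.end_mem_support)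
    · have hx2 : x ∈ Q.support := Walk.snd_mem_support_of_mem_edges Q he
      simp only [Walk.support_cons, List.nodup_cons] at hn
      exact hn.1 hx2

open Classical in
/-- parent function towards `v` along shortest paths. -/
noncomputable def par (H : SimpleGraph V) (v : V) (w : V) : V :=
  if h : ∃ u, H.Adj w u ∧ H.dist v u + 1 = H.dist v w then h.choose else v

lemma par_spec {H : SimpleGraph V} {v w : V} (hr : H.Reachable v w) (hd : H.dist v w ≠ 0) :
    H.Adj w (par H v w) ∧ H.dist v (par H v w) + 1 = H.dist v w := by
  have hex : ∃ u, H.Adj w u ∧ H.dist v u + 1 = H.dist v w := by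
    obtain ⟨W, hW⟩ := hr.exists_walk_length_eq_dist
    have hWlen : W.length ≠ 0 := by rw [hW]; exact hd
    rcases hWr : W.reverse with _ | ⟨h, Q⟩
    · exfalso
      have := congrArg Walk.length hWr
      simp only [Walk.length_reverse, Walk.length_nil] at this
      exact hWlen this
    · rename_i u
      refine ⟨u, h, ?_⟩
      have hlen : Q.length + 1 = W.length := by
        have := congrArg Walk.length hWr
        simp only [Walk.length_reverse, Walk.length_cons] at this
        omega
      have h1 : H.dist v u ≤ Q.length := by
        have := SimpleGraph.dist_le Q.reverse
        simpa using this
      have h3 : H.dist v w ≤ H.dist v u + 1 := by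
        have hru : H.Reachable v u := ⟨Q.reverse⟩
        obtain ⟨Wu, hWu⟩ := hru.exists_walk_length_eq_dist
        have := SimpleGraph.dist_le (Wu.concat h.symm)
        rwa [Walk.length_concat, hWu] at this
      omega
  rw [par]
  rw [dif_pos hex]
  exact hex.choose_spec

lemma iter_spec {H : SimpleGraph V} {v w : V} (hr : H.Reachable v w) :
    ∀ k, k ≤ H.dist v w →
      H.Reachable v ((par H v)^[k] w) ∧ H.dist v ((par H v)^[k] w) = H.dist v w - k := by
  intro k
  induction k with
  | zero => intro _; simpa using hr
  | succ k ih =>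
    intro hk
    obtain ⟨hr', hd'⟩ := ih (by omega)
    have hne : H.dist v ((par H v)^[k] w) ≠ 0 := by omega
    obtain ⟨hadj, hdd⟩ := par_spec hr' hne
    rw [Function.iterate_succ_apply']
    exact ⟨hr'.trans hadj.reachable, by omega⟩

lemma iter_top {H : SimpleGraph V} {v w : V} (hr : H.Reachable v w) :
    (par H v)^[H.dist v w] w = v := by
  obtain ⟨hr', hd'⟩ := iter_spec hr (H.dist v w) le_rfl
  have : H.dist v ((par H v)^[H.dist v w] w) = 0 := by omega
  rcases SimpleGraph.dist_eq_zero_iff_eq_or_not_reachable.mp this with h | h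
  · exact h.symm
  · exact absurd hr' h

/-- the chain list `[w, f w, f² w, ...]` with `k+1` entries. -/
def clist (f : V → V) : ℕ → V → List V
  | 0, w => [w]
  | (k+1), w => w :: clist f k (f w)

@[simp] lemma clist_ne_nil (f : V → V) (k : ℕ) (w : V) : clist f k w ≠ [] := by
  cases k <;> simp [clist]

@[simp] lemma clist_length (f : V → V) : ∀ (k : ℕ) (w : V), (clist f k w).length = k + 1 := by
  intro k
  induction k with
  | zero => intro w; rfl
  | succ k ih => intro w; simp [clist, ih]

@[simp] lemma clist_head? (f : V → V) (k : ℕ) (w : V) : (clist f k w).head? = some w := by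
  cases k <;> rfl

lemma clist_getLast? (f : V → V) : ∀ (k : ℕ) (w : V), (clist f k w).getLast? = some (f^[k] w) := by
  intro k
  induction k with
  | zero => intro w; rfl
  | succ k ih =>
    intro w
    rw [clist, List.getLast?_cons, ih (f w), Function.iterate_succ_apply]
    rfl

lemma clist_mem (f : V → V) : ∀ (k : ℕ) (w : V) (x : V), x ∈ clist f k w → ∃ j ≤ k, x = f^[j] w := by
  intro k
  induction k with
  | zero =>
    intro w x hx
    simp only [clist, List.mem_singleton] at hx
    exact ⟨0, le_rfl, by simpa using hx⟩
  | succ k ih =>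
    intro w x hx
    simp only [clist, List.mem_cons] at hx
    rcases hx with rfl | hx
    · exact ⟨0, by omega, by simp⟩
    · obtain ⟨j, hj, hx⟩ := ih (f w) x hx
      exact ⟨j + 1, by omega, by rw [Function.iterate_succ_apply]; exact hx⟩

lemma clist_chain' {H : SimpleGraph V} {v : V} :
    ∀ (k : ℕ) (w : V), H.Reachable v w → k ≤ H.dist v w →
      (clist (par H v) k w).IsChain H.Adj := by
  intro k
  induction k with
  | zero => intro w _ _; simp [clist]
  | succ k ih =>
    intro w hr hk
    have hne : H.dist v w ≠ 0 := by omega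
    obtain ⟨hadj, hdd⟩ := par_spec hr hne
    rw [clist, List.isChain_cons]
    constructor
    · intro y hy
      rw [clist_head?] at hy
      simp only [Option.mem_def, Option.some.injEq] at hy
      subst hy
      exact hadj
    · exact ih (par H v w) (hr.trans hadj.reachable) (by omega)

lemma clist_nodup {H : SimpleGraph V} {v : V} :
    ∀ (k : ℕ) (w : V), H.Reachable v w → k ≤ H.dist v w →
      (clist (par H v) k w).Nodup := by
  intro k
  induction k with
  | zero => intro w _ _; simp [clist]
  | succ k ih =>
    intro w hr hk
    have hne : H.dist v w ≠ 0 := by omega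
    obtain ⟨hadj, hdd⟩ := par_spec hr hne
    have hrf : H.Reachable v (par H v w) := hr.trans hadj.reachable
    rw [clist, List.nodup_cons]
    constructor
    · intro hw
      obtain ⟨j, hj, hx⟩ := clist_mem (par H v) k (par H v w) w hw
      have : (par H v)^[j] (par H v w) = (par H v)^[j+1] w := by
        rw [Function.iterate_succ_apply]
      rw [this] at hx
      have := (iter_spec hr (j+1) (by omega)).2
      rw [← hx] at this
      omega
    · exact ih (par H v w) hrf (by omega)

lemma nbr_out [Fintype V] {H : SimpleGraph V} {J : H.Subgraph} {r : ℕ}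
    (hdeg : ∀ w ∈ J.verts, 2*r ≤ (J.neighborSet w).ncard)
    {w : V} (hw : w ∈ J.verts) (S : Finset V) (hS : S.card < 2*r) :
    ∃ u, J.Adj w u ∧ u ∉ S := by
  by_contra h
  push_neg at h
  have hsub : J.neighborSet w ⊆ ↑S := fun u hu => h u hu
  have h1 := Set.ncard_le_ncard hsub S.finite_toSet
  rw [Set.ncard_coe_finset] at h1
  have h2 := hdeg w hw
  omega

lemma greedy [Fintype V] {H : SimpleGraph V} {J : H.Subgraph} {r : ℕ}
    (hdeg : ∀ w ∈ J.verts, 2*r ≤ (J.neighborSet w).ncard) :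
    ∀ (k : ℕ) (S : Finset V) (a : V), a ∈ J.verts → a ∉ S → S.card + k + 1 ≤ 2*r →
      ∃ l : List V, l.length = k + 1 ∧ l.getLast? = some a ∧ l.IsChain J.Adj ∧
        l.Nodup ∧ (∀ x ∈ l, x ∈ J.verts) ∧ ∀ x ∈ l, x ∉ S := by
  classical
  intro k
  induction k with
  | zero =>
    intro S a ha haS _
    refine ⟨[a], by simp, by simp, by simp, by simp, ?_, ?_⟩ <;>
      · intro x hx; simp only [List.mem_singleton] at hx; subst hx; assumption
  | succ k ih =>
    intro S a ha haS hcard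
    obtain ⟨l, hlen, hlast, hchain, hnodup, hverts, hS⟩ := ih S a ha haS (by omega)
    obtain ⟨h0, t, rfl⟩ : ∃ h0 t, l = h0 :: t := by
      cases l with
      | nil => simp at hlen
      | cons h0 t => exact ⟨h0, t, rfl⟩
    have hh0 : h0 ∈ J.verts := hverts h0 (by simp)
    obtain ⟨u, hu, huS⟩ := nbr_out hdeg hh0 (S ∪ (h0 :: t).toFinset) (by
      have : ((h0 :: t).toFinset).card ≤ (h0 :: t).length := List.toFinset_card_le _
      have h3 := Finset.card_union_le S (h0 :: t).toFinset
      omega)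
    simp only [Finset.mem_union, List.mem_toFinset, not_or] at huS
    refine ⟨u :: h0 :: t, by simpa using hlen, ?_, ?_, ?_, ?_, ?_⟩
    · rw [List.getLast?_cons_cons]; exact hlast
    · rw [List.isChain_cons_cons]; exact ⟨hu.symm, hchain⟩
    · rw [List.nodup_cons]; exact ⟨huS.2, hnodup⟩
    · intro x hx
      rcases List.mem_cons.mp hx with rfl | hx
      · exact J.edge_vert hu.symm
      · exact hverts x hx
    · intro x hx
      rcases List.mem_cons.mp hx with rfl | hx
      · exact huS.1
      · exact hS x hx


lemma stem_const [Fintype V] {H : SimpleGraph V} {J : H.Subgraph} {r ℓ : ℕ} (A : V → V)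
    (hdeg : ∀ w ∈ J.verts, 2*r ≤ (J.neighborSet w).ncard)
    (hbud : ℓ + 2 ≤ 2*r)
    (hmono : ∀ (L : List V) (x y : V), L.length = ℓ + 1 → L.IsChain J.Adj →
        L.Nodup → (∀ z ∈ L, z ∈ J.verts) → L.head? = some x → L.getLast? = some y →
        A x = A y) :
    ∀ (m : ℕ) (t : List V) (x y : V), 2*m + 1 ≤ ℓ → t.length = 2*m + 1 → t.IsChain J.Adj →
      t.Nodup → (∀ z ∈ t, z ∈ J.verts) → t.head? = some x → t.getLast? = some y →
      A x = A y := by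
  classical
  intro m
  induction m with
  | zero =>
    intro t x y _ hlen _ _ _ hhead hlast
    obtain ⟨z, rfl⟩ : ∃ z, t = [z] := by
      match t, hlen with
      | [z], _ => exact ⟨z, rfl⟩
    simp only [List.head?_cons, Option.some.injEq] at hhead
    simp only [List.getLast?_singleton, Option.some.injEq] at hlast
    rw [← hhead, ← hlast]
  | succ m ih =>
    intro t x y hm hlen hchain hnodup hverts hhead hlast
    obtain ⟨a, b, cc, t'', rfl⟩ : ∃ a b cc t'', t = a :: b :: cc :: t'' := by
      match t, hlen with
      | (a :: b :: cc :: t''), _ => exact ⟨a, b, cc, t'', rfl⟩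
    have hax : a = x := by simpa using hhead
    subst hax
    have hab : J.Adj a b := (List.isChain_cons_cons.mp hchain).1
    have hbc : J.Adj b cc := (List.isChain_cons_cons.mp (List.isChain_cons_cons.mp hchain).2).1
    have hxb : a ≠ b := (J.adj_sub hab).ne
    have hbcne : b ≠ cc := (J.adj_sub hbc).ne
    have hxc : a ≠ cc := by
      intro h
      have := (List.nodup_cons.mp hnodup).1
      rw [h] at this
      exact this (by simp)
    have hl3 : 3 ≤ ℓ := by
      have : (a :: b :: cc :: t'').length = 2*(m+1)+1 := hlen
      simp only [List.length_cons] at this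
      omega
    -- the shift : A a = A cc
    have hshift : A a = A cc := by
      obtain ⟨t1, ht1, ht1S⟩ := nbr_out hdeg (J.edge_vert hab.symm) {a, cc} (by
        have h2 : ({a, cc} : Finset V).card ≤ 2 := by
          apply le_trans (Finset.card_insert_le _ _)
          simp
        omega)
      have ht1b : t1 ≠ b := fun h => (J.adj_sub ht1).ne' (h ▸ rfl)
      simp only [Finset.mem_insert, Finset.mem_singleton, not_or] at ht1S
      obtain ⟨T, hTlen, hTlast, hTchain, hTnodup, hTverts, hTS⟩ :=
        greedy hdeg (ℓ - 2) {a, b, cc} t1 (J.edge_vert ht1.symm)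
          (by simp only [Finset.mem_insert, Finset.mem_singleton, not_or]
              exact ⟨ht1S.1, ht1b, ht1S.2⟩)
          (by
            have h3 : ({a, b, cc} : Finset V).card ≤ 3 := by
              apply le_trans (Finset.card_insert_le _ _)
              have := Finset.card_insert_le b ({cc} : Finset V)
              simp only [Finset.card_singleton] at this
              omega
            omega)
      obtain ⟨th, hth⟩ : ∃ th, T.head? = some th := by
        cases T with
        | nil => simp at hTlen
        | cons u T' => exact ⟨u, rfl⟩
      have hTnotmem : ∀ z ∈ T, z ≠ a ∧ z ≠ b ∧ z ≠ cc := by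
        intro z hz
        have := hTS z hz
        simp only [Finset.mem_insert, Finset.mem_singleton, not_or] at this
        exact this
      have hwin : ∀ d : V, J.Adj b d → d ≠ b → d ∉ T → d ∈ J.verts → A th = A d := by
        intro d hbd hdb hdT hdverts
        refine hmono (T ++ [b, d]) th d ?_ ?_ ?_ ?_ ?_ ?_
        · simp only [List.length_append, hTlen]
          simp
          omega
        · rw [List.isChain_append]
          refine ⟨hTchain, ?_, ?_⟩
          · rw [List.isChain_pair]
            exact hbd
          · intro p hp q hq
            rw [hTlast] at hp
            simp only [Option.mem_def, Option.some.injEq] at hp hq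
            subst hp
            rw [List.head?_cons] at hq
            cases hq
            exact ht1.symm
        · rw [List.nodup_append]
          refine ⟨hTnodup, by simp [hdb.symm], ?_⟩
          intro z hz w hz' hzw; subst hzw
          simp only [List.mem_cons, List.mem_singleton, List.not_mem_nil, or_false] at hz'
          rcases hz' with rfl | rfl
          · exact (hTnotmem z hz).2.1 rfl
          · exact hdT hz
        · intro z hz
          rcases List.mem_append.mp hz with hz | hz
          · exact hTverts z hz
          · simp only [List.mem_cons, List.mem_singleton, List.not_mem_nil, or_false] at hz
            rcases hz with rfl | rfl
            · exact J.edge_vert hbd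
            · exact hdverts
        · rw [List.head?_append, hth]
          rfl
        · simp [List.getLast?_append]
      have h1 : A th = A a := hwin a hab.symm hxb
        (fun h => ((hTnotmem a h).1 rfl)) (J.edge_vert hab)
      have h2 : A th = A cc := hwin cc hbc hbcne.symm
        (fun h => ((hTnotmem cc h).2.2 rfl)) (J.edge_vert hbc.symm)
      exact h1.symm.trans h2
    -- recurse on cc :: t''
    have := ih (cc :: t'') cc y (by omega)
      (by simpa using (by have := hlen; simp at this; simp; omega : (cc :: t'').length = 2*m+1))
      ((List.isChain_cons_cons.mp hchain).2.tail)
      ((List.nodup_cons.mp (List.nodup_cons.mp hnodup).2).2)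
      (fun z hz => hverts z (by simp [hz]))
      rfl
      (by simpa using hlast)
    exact hshift.trans this

lemma aux [Fintype V] (r : ℕ) (hr : 1 ≤ r) (H : SimpleGraph V) (hH : CFree H (2 * r + 1)) :
    ∀ (s : ℕ), s ≤ r → ∀ (v : V) (J : H.Subgraph), J.Connected → J.verts.Nonempty →
      (∀ w ∈ J.verts, H.Reachable v w ∧ H.dist v w = s) →
      (∀ w ∈ J.verts, 2*r ≤ (J.neighborSet w).ncard) → False := by
  intro s
  induction s using Nat.strong_induction_on with
  | _ s ih =>
  intro hs v J hconn hne hsub hdeg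
  rcases Nat.eq_zero_or_pos s with hs0 | hs1
  · subst hs0
    obtain ⟨w0, hw0⟩ := hne
    have hd0 := (hsub w0 hw0).2
    have hv : w0 = v := by
      rcases SimpleGraph.dist_eq_zero_iff_eq_or_not_reachable.mp hd0 with h | h
      · exact h.symm
      · exact absurd (hsub w0 hw0).1 h
    have hpos : (J.neighborSet w0).ncard ≠ 0 := by have := hdeg w0 hw0; omega
    obtain ⟨u, hu⟩ := Set.nonempty_of_ncard_ne_zero hpos
    have huv : u ∈ J.verts := J.edge_vert hu.symm
    have hud := (hsub u huv).2
    have huveq : u = v := by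
      rcases SimpleGraph.dist_eq_zero_iff_eq_or_not_reachable.mp hud with h | h
      · exact h.symm
      · exact absurd (hsub u huv).1 h
    have : J.Adj v v := by rw [hv, huveq] at hu; exact hu
    exact H.irrefl (J.adj_sub this)
  · set f := par H v with hf
    set ℓ := 2*(r - s) + 1 with hl
    by_cases hmono : ∀ (L : List V) (x y : V), L.length = ℓ + 1 → L.IsChain J.Adj →
        L.Nodup → (∀ z ∈ L, z ∈ J.verts) → L.head? = some x → L.getLast? = some y →
        f^[s-1] x = f^[s-1] y
    · rcases Nat.lt_or_ge s 2 with hs2 | hs2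
      · -- s = 1
        have hseq : s = 1 := by omega
        obtain ⟨w0, hw0⟩ := hne
        obtain ⟨L, hLlen, hLlast, hLchain, hLnodup, hLverts, -⟩ :=
          greedy hdeg ℓ (∅ : Finset V) w0 hw0 (by simp) (by simp [hl]; omega)
        obtain ⟨hd, rest, rfl⟩ : ∃ hd rest, L = hd :: rest := by
          cases L with
          | nil => simp at hLlen
          | cons hd rest => exact ⟨hd, rest, rfl⟩
        have heq := hmono (hd :: rest) hd w0 hLlen hLchain hLnodup hLverts rfl hLlast
        rw [hseq] at heq
        simp only [Nat.sub_self, Function.iterate_zero_apply] at heq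
        have hrest : rest ≠ [] := by
          intro h
          subst h
          simp only [List.length_cons, List.length_nil] at hLlen
          omega
        have hw0rest : w0 ∈ rest := by
          have h0 : (hd :: rest).getLast? = rest.getLast? := by
            cases rest with
            | nil => exact absurd rfl hrest
            | cons c2 t2 => rw [List.getLast?_cons_cons]
          rw [h0] at hLlast
          exact List.mem_of_getLast? hLlast
        rw [heq] at hLnodup
        exact (List.nodup_cons.mp hLnodup).1 hw0rest
      · -- s ≥ 2
        have hedge : ∀ x y, J.Adj x y → f^[s-1] x = f^[s-1] y := by
          intro x y hxy
          have hx : x ∈ J.verts := J.edge_vert hxy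
          have hy : y ∈ J.verts := J.edge_vert hxy.symm
          obtain ⟨Sl, hSlen, hSlast, hSchain, hSnodup, hSverts, hSS⟩ :=
            greedy hdeg (ℓ - 1) ({y} : Finset V) x hx (by simp [(J.adj_sub hxy).ne])
              (by simp [hl]; omega)
          have hSlen' : Sl.length = ℓ := by rw [hSlen]; omega
          obtain ⟨s0, hs0⟩ : ∃ s0, Sl.head? = some s0 := by
            cases Sl with
            | nil => simp [hl] at hSlen'
            | cons u T' => exact ⟨u, rfl⟩
          have hynot : ∀ z ∈ Sl, z ≠ y := by
            intro z hz
            have := hSS z hz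
            simpa using this
          have hwin0 : f^[s-1] s0 = f^[s-1] y := by
            refine hmono (Sl ++ [y]) s0 y ?_ ?_ ?_ ?_ ?_ ?_
            · simp [hSlen']
            · rw [List.isChain_append]
              refine ⟨hSchain, by simp, ?_⟩
              intro p hp q hq
              rw [hSlast] at hp
              simp only [Option.mem_def, Option.some.injEq, List.head?_cons] at hp hq
              subst hp
              rw [← hq]
              exact hxy
            · rw [List.nodup_append]
              exact ⟨hSnodup, by simp, fun z hz w hw hzw => (hynot z hz) (by simp at hw; exact hzw.trans hw)⟩
            · intro z hz
              rcases List.mem_append.mp hz with hz | hz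
              · exact hSverts z hz
              · have : z = y := by simpa using hz
                rw [this]
                exact hy
            · rw [List.head?_append, hs0]; rfl
            · simp [List.getLast?_append]
          have hSlen'' : Sl.length = 2*(r-s) + 1 := by rw [hSlen', hl]
          have hstem : f^[s-1] s0 = f^[s-1] x :=
            stem_const (f^[s-1]) hdeg (by omega) hmono (r-s) Sl s0 x (by omega)
              hSlen'' hSchain hSnodup hSverts hs0 hSlast
          exact hstem.symm.trans hwin0
        have key : ∀ (p q : J.verts) (W : J.coe.Walk p q),
            f^[s-1] (p : V) = f^[s-1] (q : V) := by
          intro p q W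
          induction W with
          | nil => rfl
          | cons h W ih' => exact (hedge _ _ h).trans ih'
        have hconst : ∀ x ∈ J.verts, ∀ y ∈ J.verts, f^[s-1] x = f^[s-1] y := by
          intro x hx y hy
          obtain ⟨W⟩ := hconn ⟨x, hx⟩ ⟨y, hy⟩
          exact key _ _ W
        obtain ⟨w0, hw0⟩ := hne
        have hrw0 := (hsub w0 hw0).1
        have hdw0 := (hsub w0 hw0).2
        have hc := iter_spec hrw0 (s-1) (by omega)
        rw [← hf] at hc
        have hrvc : H.Reachable v (f^[s-1] w0) := hc.1
        have hdvc : H.dist v (f^[s-1] w0) = 1 := by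
          rw [hc.2, hdw0]
          omega
        have hsub' : ∀ w ∈ J.verts,
            H.Reachable (f^[s-1] w0) w ∧ H.dist (f^[s-1] w0) w = s - 1 := by
          intro w hw
          have hrw := (hsub w hw).1
          have hdw := (hsub w hw).2
          have hA1w : f^[s-1] w = f^[s-1] w0 := hconst w hw w0 hw0
          obtain ⟨Ww, hWw⟩ := exists_walk_of_chain H (clist f (s-1) w) w (f^[s-1] w)
            (clist_head? f (s-1) w) (clist_getLast? f (s-1) w)
            (clist_chain' (s-1) w hrw (by rw [hdw]; omega))
          have hWwlen : Ww.length = s - 1 := by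
            have h9 := Ww.length_support
            rw [hWw, clist_length] at h9
            omega
          have hrcw : H.Reachable (f^[s-1] w0) w := (Walk.reachable (Ww.copy rfl hA1w)).symm
          refine ⟨hrcw, ?_⟩
          have hup : H.dist (f^[s-1] w0) w ≤ s - 1 := by
            have := SimpleGraph.dist_le (Ww.copy rfl hA1w).reverse
            rwa [Walk.length_reverse, Walk.length_copy, hWwlen] at this
          have hlow : s ≤ 1 + H.dist (f^[s-1] w0) w := by
            obtain ⟨Wvc, hWvc⟩ := hrvc.exists_walk_length_eq_dist
            obtain ⟨Wcw, hWcw⟩ := hrcw.exists_walk_length_eq_dist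
            have h9 := SimpleGraph.dist_le (Wvc.append Wcw)
            rw [Walk.length_append, hWvc, hWcw, hdvc, hdw] at h9
            omega
          omega
        exact ih (s-1) (by omega) (by omega) (f^[s-1] w0) J hconn ⟨w0, hw0⟩ hsub' hdeg
    · push_neg at hmono
      obtain ⟨L, a, b, hlen, hchain, hnodup, hverts, hhead, hlast, hA1⟩ := hmono
      obtain ⟨L', rfl⟩ : ∃ L', L = a :: L' := by
        cases L with
        | nil => simp at hhead
        | cons c t =>
          simp only [List.head?_cons, Option.some.injEq] at hhead
          exact ⟨t, by rw [hhead]⟩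
      have ha : a ∈ J.verts := hverts a (by simp)
      have hb : b ∈ J.verts := by
        have : b ∈ a :: L' := List.mem_of_getLast? hlast
        exact hverts b this
      have hra := (hsub a ha).1
      have hda := (hsub a ha).2
      have hrb := (hsub b hb).1
      have hdb := (hsub b hb).2
      have hL'len : L'.length = ℓ := by simpa using hlen
      have haL' : a ∉ L' := (List.nodup_cons.mp hnodup).1
      have hL'nodup : L'.Nodup := (List.nodup_cons.mp hnodup).2
      -- chains
      have hrfb : H.Reachable v (f b) ∧ H.dist v (f b) = s - 1 := by
        have := iter_spec hrb 1 (by omega)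
        simpa [hdb] using this
      have hjunc1 : H.Adj b (f b) := (par_spec hrb (by omega)).1
      set B2 := clist f (s-1) (f b) with hB2
      set B3 := (clist f (s-1) a).reverse with hB3
      set R := L' ++ (B2 ++ B3) with hR
      -- key iterate facts
      have hfsb : f^[s-1] (f b) = f^[s] b := by
        conv_rhs => rw [show s = s - 1 + 1 from by omega]
        rw [Function.iterate_succ_apply]
      have hftopb : f^[s] b = v := by
        have := iter_top hrb
        rwa [hdb] at this
      have hfsa_adj : H.Adj (f^[s-1] a) v := by
        have h1 := iter_spec hra (s-1) (by omega)
        have h2 : H.dist v (f^[s-1] a) ≠ 0 := by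
          rw [h1.2, hda]; omega
        have h3 := (par_spec h1.1 h2).1
        rw [← hf] at h3
        have h4 : f (f^[s-1] a) = f^[s] a := by
          conv_rhs => rw [show s = s - 1 + 1 from by omega]
          rw [Function.iterate_succ_apply']
        have h5 : f^[s] a = v := by
          have := iter_top hra
          rwa [hda] at this
        rw [h4, h5] at h3
        exact h3
      -- chain of full list
      have hchainH : (((a :: L') ++ (B2 ++ B3))).IsChain H.Adj := by
        rw [List.isChain_append]
        refine ⟨hchain.imp (fun _ _ hadj => J.adj_sub hadj), ?_, ?_⟩
        · rw [List.isChain_append]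
          refine ⟨clist_chain' (s-1) (f b) hrfb.1 (by omega), ?_, ?_⟩
          · rw [hB3]
            rw [List.isChain_reverse]
            have := clist_chain' (H := H) (v := v) (s-1) a hra (by omega)
            exact List.IsChain.imp (fun x y h => h.symm) this
          · intro p hp q hq
            rw [hB2, clist_getLast?] at hp
            rw [hB3, List.head?_reverse, clist_getLast?] at hq
            simp only [Option.mem_def, Option.some.injEq] at hp hq
            subst hp; subst hq
            rw [hfsb, hftopb]
            exact hfsa_adj.symm
        · intro p hp q hq
          rw [hlast] at hp
          simp only [Option.mem_def, Option.some.injEq] at hp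
          subst hp
          have : (B2 ++ B3).head? = some (f b) := by
            rw [List.head?_append]
            rw [hB2, clist_head?]
            rfl
          rw [this] at hq
          simp only [Option.mem_def, Option.some.injEq] at hq
          subst hq
          exact hjunc1
      -- nodup of R
      have hmemB2 : ∀ z ∈ B2, ∃ j, j + 1 ≤ s ∧ z = f^[j+1] b := by
        intro z hz
        obtain ⟨j, hj, hzj⟩ := clist_mem f (s-1) (f b) z hz
        exact ⟨j, by omega, by rw [hzj, Function.iterate_succ_apply]⟩
      have hmemB3 : ∀ z ∈ B3, ∃ i, i ≤ s - 1 ∧ z = f^[i] a := by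
        intro z hz
        rw [hB3, List.mem_reverse] at hz
        exact clist_mem f (s-1) a z hz
      have hdistB2 : ∀ z ∈ B2, H.dist v z < s := by
        intro z hz
        obtain ⟨j, hj, rfl⟩ := hmemB2 z hz
        have h9 := (iter_spec hrb (j+1) (by omega)).2
        rw [← hf] at h9
        rw [hdb] at h9
        omega
      have hRnodup : R.Nodup := by
        rw [hR, List.nodup_append, List.nodup_append]
        refine ⟨hL'nodup, ⟨?_, ?_, ?_⟩, ?_⟩
        · exact clist_nodup (s-1) (f b) hrfb.1 (by omega)
        · rw [hB3, List.nodup_reverse]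
          exact clist_nodup (s-1) a hra (by omega)
        · intro z hz2 w hz3 hzw; subst hzw
          obtain ⟨j, hj, hzb⟩ := hmemB2 z hz2
          obtain ⟨i, hi, hza⟩ := hmemB3 z hz3
          have hd2 := (iter_spec hrb (j+1) (by omega)).2
          have hd3 := (iter_spec hra i (by omega)).2
          rw [← hf] at hd2 hd3
          rw [← hzb] at hd2
          rw [← hza] at hd3
          rw [hda] at hd3
          rw [hdb] at hd2
          have hij : i = j + 1 := by omega
          apply hA1
          have e1 : f^[s-1] a = f^[(s-1-i) + i] a := by congr 1; omega
          have e2 : f^[s-1] b = f^[(s-1-i) + (j+1)] b := by congr 1; omega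
          rw [e1, e2, Function.iterate_add_apply, Function.iterate_add_apply, ← hza, ← hzb]
        · intro z hzL w hz23 hzw; subst hzw
          have hzJ : z ∈ J.verts := hverts z (by simp [hzL])
          have hdz : H.dist v z = s := (hsub z hzJ).2
          rcases List.mem_append.mp hz23 with hz2 | hz3
          · have := hdistB2 z hz2
            omega
          · obtain ⟨i, hi, rfl⟩ := hmemB3 z hz3
            rcases Nat.eq_zero_or_pos i with hi0 | hi1
            · subst hi0
              simp only [Function.iterate_zero_apply] at hzL
              exact haL' hzL
            · have h9 := (iter_spec hra i (by omega)).2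
              rw [← hf] at h9
              rw [hda] at h9
              omega
      -- build the walk
      obtain ⟨c, t, hct⟩ : ∃ c t, L' = c :: t := by
        cases L' with
        | nil => exfalso; simp at hL'len
        | cons c t => exact ⟨c, t, rfl⟩
      subst hct
      have hRhead : R.head? = some c := by rw [hR]; rfl
      have hRlast : R.getLast? = some a := by
        rw [hR]
        simp [hB2, hB3, List.getLast?_cons, List.getLast?_append, clist_head?, clist_getLast?]
      have hcons : (a :: (c :: (t ++ (B2 ++ B3)))).IsChain H.Adj := by
        simpa using hchainH
      have hac : H.Adj a c := (List.isChain_cons_cons.mp hcons).1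
      have hRchain : R.IsChain H.Adj := by
        rw [hR]
        exact (List.isChain_cons_cons.mp hcons).2
      obtain ⟨W0, hW0⟩ := exists_walk_of_chain H R c a hRhead hRlast hRchain
      have hW0len : W0.length + 1 = R.length := by
        rw [← SimpleGraph.Walk.length_support, hW0]
      have hRlen : R.length = ℓ + 2 * s := by
        rw [hR]
        simp only [List.length_append, List.length_cons, List.length_reverse, hB2, hB3,
          clist_length]
        have : (c :: t).length = ℓ := hL'len
        simp only [List.length_cons] at this
        omega
      have hWcyc : (SimpleGraph.Walk.cons hac W0).IsCycle := by
        rw [SimpleGraph.Walk.cons_isCycle_iff]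
        constructor
        · rw [SimpleGraph.Walk.isPath_def, hW0]
          exact hRnodup
        · intro he
          have h2len : 2 ≤ W0.length := by omega
          exact no_closing_edge W0 (by rw [hW0]; exact hRnodup) h2len he
      refine hH a (SimpleGraph.Walk.cons hac W0) hWcyc ?_
      rw [SimpleGraph.Walk.length_cons]
      omega

end CFreeAux

/-- If `H` is `C_{2r+1}`-free and `J` is a connected nonempty subgraph whose
vertices all lie at distance exactly `s ≤ r` from `v`, then `J` has a vertex of
degree less than `2r`. -/
theorem subgraph_in_sphere_min_degree_lt {V : Type*} [Fintype V]
    (r : ℕ) (hr : 1 ≤ r) (H : SimpleGraph V) (hH : CFree H (2 * r + 1))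
    (v : V) (s : ℕ) (hs : s ≤ r)
    (J : H.Subgraph) (hJconn : J.Connected) (hJne : J.verts.Nonempty)
    (hJsub : ∀ w ∈ J.verts, H.Reachable v w ∧ H.dist v w = s) :
    ∃ w ∈ J.verts, (J.neighborSet w).ncard < 2 * r := by
  by_contra h
  push_neg at h
  exact CFreeAux.aux r hr H hH s hs v J hJconn hJne hJsub h
end

section
/- Fix r ≥ 1 and let H be a C_{2r+1}-free graph with a vertex v such that every vertex of H is within distance r of v. Then for each 0 ≤ s ≤ r, the subgraph of H induced on the set of vertices at distance exactly s from v is (2r−1)-degenerate, and hence 2r-colorable. -/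
/-- A graph is `k`-degenerate if every nonempty (finite) subgraph has a vertex
of degree at most `k`. -/
def Degenerate {V : Type*} (G : SimpleGraph V) (k : ℕ) : Prop :=
  ∀ s : Set V, s.Nonempty → s.Finite → ∃ v ∈ s, (G.neighborSet v ∩ s).ncard ≤ k

open SimpleGraph Set

namespace SphereAux

variable {W : Type*}

lemma degenerate_colorable_finite (G : SimpleGraph W) (k : ℕ) (hdeg : Degenerate G k) :
    ∀ (B : Finset W), ∃ f : W → Fin (k+1), ∀ x ∈ B, ∀ y ∈ B, G.Adj x y → f x ≠ f y := by
  classical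
  intro B
  induction B using Finset.strongInductionOn with
  | _ B ih =>
    rcases B.eq_empty_or_nonempty with rfl | hBne
    · exact ⟨fun _ => 0, by simp⟩
    · obtain ⟨z, hzB, hzcard⟩ := hdeg ↑B (by simpa using hBne) B.finite_toSet
      obtain ⟨f', hf'⟩ := ih (B.erase z) (Finset.erase_ssubset (by simpa using hzB))
      set used : Finset W := (B.erase z).filter (fun t => G.Adj z t) with husdef
      have husedcard : used.card ≤ k := by
        have hsub : ↑used ⊆ G.neighborSet z ∩ ↑B := by
          intro t ht
          simp only [husdef, Finset.coe_filter, Set.mem_setOf_eq, Finset.mem_erase] at ht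
          exact ⟨ht.2, by simpa using ht.1.2⟩
        calc used.card = (↑used : Set W).ncard := (Set.ncard_coe_finset used).symm
          _ ≤ (G.neighborSet z ∩ ↑B).ncard :=
            Set.ncard_le_ncard hsub ((B.finite_toSet).subset inter_subset_right)
          _ ≤ k := by simpa using hzcard
      have hcol : ∃ col : Fin (k+1), col ∉ used.image f' := by
        by_contra hno
        push_neg at hno
        have hsub : (Finset.univ : Finset (Fin (k+1))) ⊆ used.image f' := fun col _ => hno col
        have := Finset.card_le_card hsub
        rw [Finset.card_univ, Fintype.card_fin] at this
        have := Finset.card_image_le (s := used) (f := f')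
        omega
      obtain ⟨col, hcol⟩ := hcol
      refine ⟨Function.update f' z col, ?_⟩
      intro x hx y hy hadj
      have hxyne : x ≠ y := G.ne_of_adj hadj
      by_cases hxz : x = z
      · subst hxz
        rw [Function.update_self, Function.update_of_ne (Ne.symm hxyne)]
        intro hcontra
        apply hcol
        rw [Finset.mem_image]
        exact ⟨y, by simp [husdef, Finset.mem_erase, Ne.symm hxyne, hy, hadj], hcontra.symm⟩
      · by_cases hyz : y = z
        · subst hyz
          rw [Function.update_self, Function.update_of_ne hxz]
          intro hcontra
          apply hcol
          rw [Finset.mem_image]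
          exact ⟨x, by simp [husdef, Finset.mem_erase, hxz, hx, hadj.symm], hcontra⟩
        · rw [Function.update_of_ne hxz, Function.update_of_ne hyz]
          exact hf' x (Finset.mem_erase.mpr ⟨hxz, hx⟩) y (Finset.mem_erase.mpr ⟨hyz, hy⟩) hadj

theorem degenerate_colorable (G : SimpleGraph W) (k : ℕ) (hdeg : Degenerate G k) :
    G.Colorable (k+1) := by
  classical
  have hhom : ∀ G' : G.Subgraph, G'.verts.Finite → Nonempty (G'.coe →g (⊤ : SimpleGraph (Fin (k+1)))) := by
    intro G' hfin
    obtain ⟨f, hf⟩ := degenerate_colorable_finite G k hdeg hfin.toFinset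
    refine ⟨⟨fun z => f ↑z, ?_⟩⟩
    intro a b hab
    have hGadj : G.Adj ↑a ↑b := G'.coe_adj_sub a b hab
    have haB : ↑a ∈ hfin.toFinset := by rw [Set.Finite.mem_toFinset]; exact a.2
    have hbB : ↑b ∈ hfin.toFinset := by rw [Set.Finite.mem_toFinset]; exact b.2
    exact hf ↑a haB ↑b hbB hGadj
  obtain ⟨h⟩ := nonempty_hom_of_forall_finite_subgraph_hom (fun G' hf => (hhom G' hf).some)
  exact ⟨h⟩


variable {V : Type*} {H : SimpleGraph V}
variable {V : Type*} {H : SimpleGraph V}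

/-- Build a walk from an indexing function. -/
def walkFromFn (H : SimpleGraph V) (f : ℕ → V) :
    (n : ℕ) → (∀ k, k < n → H.Adj (f k) (f (k+1))) → H.Walk (f 0) (f n)
  | 0, _ => Walk.nil
  | (n+1), h =>
    (walkFromFn H f n (fun k hk => h k (Nat.lt_succ_of_lt hk))).concat (h n n.lt_succ_self)

lemma walkFromFn_length (f : ℕ → V) (n : ℕ) (h : ∀ k, k < n → H.Adj (f k) (f (k+1))) :
    (walkFromFn H f n h).length = n := by
  induction n with
  | zero => rfl
  | succ n ih => simp [walkFromFn, Walk.length_concat, ih]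

lemma walkFromFn_support (f : ℕ → V) (n : ℕ) (h : ∀ k, k < n → H.Adj (f k) (f (k+1))) :
    (walkFromFn H f n h).support = (List.range (n+1)).map f := by
  induction n with
  | zero => simp [walkFromFn, List.range_succ]
  | succ n ih =>
      rw [walkFromFn, Walk.support_concat, ih]
      simp [List.range_succ]

lemma walkFromFn_edges (f : ℕ → V) (n : ℕ) (h : ∀ k, k < n → H.Adj (f k) (f (k+1))) :
    (walkFromFn H f n h).edges = (List.range n).map (fun k => s(f k, f (k+1))) := by
  induction n with
  | zero => simp [walkFromFn]
  | succ n ih =>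
      rw [walkFromFn, Walk.edges_concat, ih, List.range_succ]
      simp

lemma walkFromFn_isPath (f : ℕ → V) (n : ℕ) (h : ∀ k, k < n → H.Adj (f k) (f (k+1)))
    (hinj : Set.InjOn f {k | k ≤ n}) : (walkFromFn H f n h).IsPath := by
  apply Walk.IsPath.mk'
  rw [walkFromFn_support]
  refine List.Nodup.map_on ?_ List.nodup_range
  intro x hx y hy hxy
  exact hinj (by simpa using Nat.lt_succ_iff.mp (List.mem_range.mp hx))
    (by simpa using Nat.lt_succ_iff.mp (List.mem_range.mp hy)) hxy

/-- Build a cycle of length `n` from an indexing function. -/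
lemma cycle_of_fn (f : ℕ → V) (n : ℕ) (h3 : 3 ≤ n)
    (hadj : ∀ k, k < n → H.Adj (f k) (f (k+1)))
    (hcl : f n = f 0) (hinj : Set.InjOn f {k | k < n}) :
    ∃ (c : H.Walk (f 0) (f 0)), c.IsCycle ∧ c.length = n := by
  refine ⟨(walkFromFn H f n hadj).copy rfl hcl, ?_, by
    simp [Walk.length_copy, walkFromFn_length]⟩
  have hinj' : ∀ a ≤ n, ∀ b ≤ n, f a = f b → a = b ∨ (a = 0 ∧ b = n) ∨ (a = n ∧ b = 0) := by
    intro a ha b hb hab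
    rcases Nat.lt_or_ge a n with ha' | ha'
    · rcases Nat.lt_or_ge b n with hb' | hb'
      · exact Or.inl (hinj (by simp only [Set.mem_setOf_eq]; omega) (by simp only [Set.mem_setOf_eq]; omega) hab)
      · have hb'' : b = n := le_antisymm hb hb'
        subst hb''
        have : f a = f 0 := by rw [hab, hcl]
        have h0 : a = 0 := hinj ha' (by simp only [Set.mem_setOf_eq]; omega) this
        exact Or.inr (Or.inl ⟨h0, rfl⟩)
    · have ha'' : a = n := le_antisymm ha ha'
      rcases Nat.lt_or_ge b n with hb' | hb'
      · have hfb : f b = f 0 := by rw [← hab, ha'', hcl]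
        have h0 : b = 0 := hinj (by simp only [Set.mem_setOf_eq]; omega)
          (by simp only [Set.mem_setOf_eq]; omega) hfb
        exact Or.inr (Or.inr ⟨ha'', h0⟩)
      · exact Or.inl (by omega)
  constructor
  · constructor
    · constructor
      rw [Walk.edges_copy, walkFromFn_edges]
      refine List.Nodup.map_on ?_ List.nodup_range
      intro a ha b hb hab
      rw [List.mem_range] at ha hb
      rw [Sym2.eq_iff] at hab
      rcases hab with ⟨h1, _⟩ | ⟨h1, h2⟩
      · rcases hinj' a (by omega) b (by omega) h1 with h | ⟨h0, hn⟩ | ⟨hn, h0⟩ <;> omega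
      · -- f a = f (b+1), f (a+1) = f b
        rcases hinj' (a+1) (by omega) b (by omega) h2 with h | ⟨h0, hn⟩ | ⟨hn, h0⟩
        · -- b = a + 1; then f a = f (a+2)
          subst h
          rcases hinj' a (by omega) (a+2) (by omega) h1 with h | ⟨h0, hn⟩ | ⟨hn, h0⟩ <;> omega
        · omega
        · -- a + 1 = n, b = 0: f a = f 1
          rcases hinj' a (by omega) 1 (by omega) (by rw [h1, h0]) with h | ⟨h0', hn⟩ | ⟨hn, h0'⟩ <;>
            omega
    · intro hnil
      have := congrArg Walk.length hnil
      rw [Walk.length_copy, walkFromFn_length] at this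
      simp at this
      omega
  · rw [Walk.support_copy, walkFromFn_support, List.range_succ_eq_map]
    simp only [List.map_cons, List.tail_cons, List.map_map]
    refine List.Nodup.map_on ?_ List.nodup_range
    intro a ha b hb hab
    rw [List.mem_range] at ha hb
    simp only [Function.comp] at hab
    rcases hinj' (a+1) (by omega) (b+1) (by omega) hab with h | ⟨h0, hn⟩ | ⟨hn, h0⟩ <;> omega



open Classical in
/-- A choice of parent (a neighbor closer to `u`) for each vertex. -/
noncomputable def thePar (H : SimpleGraph V) (u : V) (x : V) : V :=
  if h : ∃ y, H.Adj y x ∧ H.dist u y + 1 = H.dist u x then h.choose else x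

lemma thePar_spec (hconn : H.Connected) {u x : V} (hx : H.dist u x ≠ 0) :
    H.Adj (thePar H u x) x ∧ H.dist u (thePar H u x) + 1 = H.dist u x := by
  have hr : H.Reachable u x := hconn.preconnected u x
  have hex : ∃ y, H.Adj y x ∧ H.dist u y + 1 = H.dist u x := by
    obtain ⟨p, hp⟩ := hr.exists_walk_length_eq_dist
    have hlen : p.length ≠ 0 := by rw [hp]; exact hx
    rcases hq : p.reverse with _ | ⟨hadj, q⟩
    · exfalso
      have := congrArg Walk.length hq
      rw [Walk.length_reverse] at this
      simp at this
      exact hlen (Walk.nil_iff_length_eq.mp this)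
    · rename_i y
      refine ⟨y, hadj.symm, ?_⟩
      have hql : q.length = p.length - 1 := by
        have := congrArg Walk.length hq
        rw [Walk.length_reverse] at this
        simp at this
        omega
      have h1 : H.dist u y ≤ p.length - 1 := by
        have := H.dist_le q.reverse
        rwa [Walk.length_reverse, hql] at this
      have h2 : H.dist u x ≤ H.dist u y + 1 := by
        have ht := hconn.dist_triangle (u := u) (v := y) (w := x)
        have : H.dist y x ≤ 1 := by
          have : H.dist y x = 1 := by
            rw [SimpleGraph.dist_eq_one_iff_adj]
            exact hadj.symm
          omega
        omega
      omega
  unfold thePar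
  rw [dif_pos hex]
  exact hex.choose_spec

lemma dist_parIter (hconn : H.Connected) (u x : V) :
    ∀ k, k ≤ H.dist u x → H.dist u ((thePar H u)^[k] x) = H.dist u x - k := by
  intro k
  induction k with
  | zero => simp
  | succ k ih =>
      intro hk
      rw [Function.iterate_succ_apply']
      have hne : H.dist u ((thePar H u)^[k] x) ≠ 0 := by
        rw [ih (by omega)]; omega
      have := (thePar_spec hconn hne).2
      rw [ih (by omega)] at this
      omega

lemma adj_parIter (hconn : H.Connected) (u x : V) {k : ℕ} (hk : k < H.dist u x) :
    H.Adj ((thePar H u)^[k+1] x) ((thePar H u)^[k] x) := by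
  rw [Function.iterate_succ_apply']
  have hne : H.dist u ((thePar H u)^[k] x) ≠ 0 := by
    rw [dist_parIter hconn u x k (by omega)]; omega
  exact (thePar_spec hconn hne).1

lemma parIter_center (hconn : H.Connected) (u x : V) :
    (thePar H u)^[H.dist u x] x = u := by
  have h0 : H.dist u ((thePar H u)^[H.dist u x] x) = 0 :=
    by rw [dist_parIter hconn u x _ le_rfl]; omega
  have : H.Reachable u ((thePar H u)^[H.dist u x] x) := hconn.preconnected _ _
  exact ((this.dist_eq_zero_iff).mp h0).symm

/-- the vertex `(thePar H u)^[k] x` is within distance `k` from `x`. -/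
lemma dist_to_parIter (hconn : H.Connected) (u x : V) (k : ℕ) (hk : k ≤ H.dist u x) :
    H.dist ((thePar H u)^[k] x) x ≤ k := by
  have hadj : ∀ j, j < k → H.Adj ((thePar H u)^[j] x) ((thePar H u)^[j+1] x) :=
    fun j hj => (adj_parIter hconn u x (by omega)).symm
  have := H.dist_le ((walkFromFn H (fun j => (thePar H u)^[j] x) k hadj).reverse)
  rw [Walk.length_reverse, walkFromFn_length] at this
  simpa using this


/-- There is a path of length exactly `L` inside `A` from `a` to `b`. -/
def FnPath (H : SimpleGraph V) (A : Set V) (L : ℕ) (a b : V) : Prop :=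
  ∃ f : ℕ → V, f 0 = a ∧ f L = b ∧ (∀ k, k < L → H.Adj (f k) (f (k+1))) ∧
    Set.InjOn f {k | k ≤ L} ∧ (∀ k, k ≤ L → f k ∈ A)

lemma injOn_card_le {A : Set V} (hA : A.Finite) (g : ℕ → V) (n : ℕ)
    (hinj : Set.InjOn g {k | k ≤ n}) (hmem : ∀ k, k ≤ n → g k ∈ A) :
    n + 1 ≤ hA.toFinset.card := by
  classical
  have hsub : (Finset.range (n+1)).image g ⊆ hA.toFinset := by
    intro v hv
    rw [Finset.mem_image] at hv
    obtain ⟨k, hk, rfl⟩ := hv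
    rw [Set.Finite.mem_toFinset]
    exact hmem k (by simpa using Nat.lt_succ_iff.mp (Finset.mem_range.mp hk))
  have hcard : ((Finset.range (n+1)).image g).card = n + 1 := by
    rw [Finset.card_image_of_injOn, Finset.card_range]
    intro a ha b hb hab
    exact hinj (by simpa using Nat.lt_succ_iff.mp (Finset.mem_range.mp ha))
      (by simpa using Nat.lt_succ_iff.mp (Finset.mem_range.mp hb)) hab
  calc n + 1 = _ := hcard.symm
    _ ≤ _ := Finset.card_le_card hsub

lemma extend_path {A : Set V} (hA : A.Finite) :
    ∀ (d m : ℕ) (g : ℕ → V), hA.toFinset.card - m ≤ d → 1 ≤ m →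
    (∀ k, k < m → H.Adj (g k) (g (k+1))) → Set.InjOn g {k | k ≤ m} →
    (∀ k, k ≤ m → g k ∈ A) →
    ∃ (m' : ℕ) (g' : ℕ → V), m ≤ m' ∧ (∀ k, k ≤ m → g' k = g k) ∧
      (∀ k, k < m' → H.Adj (g' k) (g' (k+1))) ∧ Set.InjOn g' {k | k ≤ m'} ∧
      (∀ k, k ≤ m' → g' k ∈ A) ∧
      (∀ t, H.Adj (g' m') t → t ∈ A → ∃ k, k < m' ∧ g' k = t) := by
  intro d
  induction d with
  | zero =>
      intro m g hd hm hadj hinj hmem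
      exfalso
      have := injOn_card_le hA g m hinj hmem
      omega
  | succ d ih =>
      intro m g hd hm hadj hinj hmem
      by_cases hst : ∀ t, H.Adj (g m) t → t ∈ A → ∃ k, k < m ∧ g k = t
      · exact ⟨m, g, le_rfl, fun k _ => rfl, hadj, hinj, hmem, hst⟩
      · push_neg at hst
        obtain ⟨t, hadjt, htA, hnot⟩ := hst
        have hgmt : g m ≠ t := fun h => H.irrefl (h ▸ hadjt)
        have hnot' : ∀ k, k ≤ m → g k ≠ t := by
          intro k hk
          rcases Nat.lt_or_ge k m with h | h
          · intro he; exact (hnot k h he).elim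
          · have : k = m := le_antisymm hk h
            rw [this]; exact hgmt
        set g' : ℕ → V := fun k => if k ≤ m then g k else t with hg'
        have hpre : ∀ k, k ≤ m → g' k = g k := by
          intro k hk; simp only [hg', if_pos hk]
        have hlast : g' (m+1) = t := by simp [hg']
        have hcard : m + 2 ≤ hA.toFinset.card := by
          refine injOn_card_le hA g' (m+1) ?_ ?_
          · intro a ha b hb hab
            simp only [Set.mem_setOf_eq] at ha hb
            rcases Nat.lt_or_ge a (m+1) with ha' | ha' <;>
              rcases Nat.lt_or_ge b (m+1) with hb' | hb'
            · rw [hpre a (by omega), hpre b (by omega)] at hab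
              exact hinj (by simp only [Set.mem_setOf_eq]; omega)
                (by simp only [Set.mem_setOf_eq]; omega) hab
            · have hb'' : b = m + 1 := by omega
              rw [hpre a (by omega), hb'', hlast] at hab
              exact absurd hab (hnot' a (by omega))
            · have ha'' : a = m + 1 := by omega
              rw [hpre b (by omega), ha'', hlast] at hab
              exact absurd hab.symm (hnot' b (by omega))
            · omega
          · intro k hk
            rcases Nat.lt_or_ge k (m+1) with h | h
            · rw [hpre k (by omega)]; exact hmem k (by omega)
            · have : k = m + 1 := by omega
              rw [this, hlast]; exact htA
        have hadj' : ∀ k, k < m + 1 → H.Adj (g' k) (g' (k+1)) := by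
          intro k hk
          rcases Nat.lt_or_ge k m with h | h
          · rw [hpre k (by omega), hpre (k+1) (by omega)]; exact hadj k h
          · have : k = m := by omega
            rw [this, hpre m le_rfl, hlast]; exact hadjt
        have hinj' : Set.InjOn g' {k | k ≤ m + 1} := by
          intro a ha b hb hab
          simp only [Set.mem_setOf_eq] at ha hb
          rcases Nat.lt_or_ge a (m+1) with ha' | ha' <;>
            rcases Nat.lt_or_ge b (m+1) with hb' | hb'
          · rw [hpre a (by omega), hpre b (by omega)] at hab
            exact hinj (by simp only [Set.mem_setOf_eq]; omega)
              (by simp only [Set.mem_setOf_eq]; omega) hab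
          · have hb'' : b = m + 1 := by omega
            rw [hpre a (by omega), hb'', hlast] at hab
            exact absurd hab (hnot' a (by omega))
          · have ha'' : a = m + 1 := by omega
            rw [hpre b (by omega), ha'', hlast] at hab
            exact absurd hab.symm (hnot' b (by omega))
          · omega
        have hmem' : ∀ k, k ≤ m + 1 → g' k ∈ A := by
          intro k hk
          rcases Nat.lt_or_ge k (m+1) with h | h
          · rw [hpre k (by omega)]; exact hmem k (by omega)
          · have : k = m + 1 := by omega
            rw [this, hlast]; exact htA
        obtain ⟨m', g'', hm', hpre', h1, h2, h3, h4⟩ :=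
          ih (m+1) g' (by omega) (by omega) hadj' hinj' hmem'
        exact ⟨m', g'', by omega, fun k hk => by
            rw [hpre' k (by omega), hpre k hk], h1, h2, h3, h4⟩

theorem Ecore {A : Set V} (hA : A.Finite) {δ L : ℕ} (hL1 : 1 ≤ L) (hLodd : Odd L)
    (hLδ : L + 1 ≤ δ)
    (hdeg : ∀ a ∈ A, δ ≤ (H.neighborSet a ∩ A).ncard)
    (c : V → V) (hc : ∀ a b, FnPath H A L a b → c a = c b)
    (extend_path : ∀ (d m : ℕ) (g : ℕ → V), hA.toFinset.card - m ≤ d → 1 ≤ m →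
      (∀ k, k < m → H.Adj (g k) (g (k+1))) → Set.InjOn g {k | k ≤ m} →
      (∀ k, k ≤ m → g k ∈ A) →
      ∃ (m' : ℕ) (g' : ℕ → V), m ≤ m' ∧ (∀ k, k ≤ m → g' k = g k) ∧
        (∀ k, k < m' → H.Adj (g' k) (g' (k+1))) ∧ Set.InjOn g' {k | k ≤ m'} ∧
        (∀ k, k ≤ m' → g' k ∈ A) ∧
        (∀ t, H.Adj (g' m') t → t ∈ A → ∃ k, k < m' ∧ g' k = t))
    {x y : V} (hx : x ∈ A) (hy : y ∈ A) (hxy : H.Adj x y) : c x = c y := by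
  classical
  set g₀ : ℕ → V := fun k => if k = 0 then x else y with hg₀
  have hxny : x ≠ y := H.ne_of_adj hxy
  obtain ⟨m, hm1, g, hpre, hadj, hinj, hmem, hmax⟩ :
      ∃ (m : ℕ), 1 ≤ m ∧ ∃ (g : ℕ → V), (∀ k, k ≤ 1 → g k = g₀ k) ∧
        (∀ k, k < m → H.Adj (g k) (g (k+1))) ∧ Set.InjOn g {k | k ≤ m} ∧
        (∀ k, k ≤ m → g k ∈ A) ∧
        (∀ t, H.Adj (g m) t → t ∈ A → ∃ k, k < m ∧ g k = t) := by
    obtain ⟨m', g', h0, h1, h2, h3, h4, h5⟩ :=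
      extend_path (hA.toFinset.card - 1) 1 g₀ le_rfl le_rfl
        (by
          intro k hk
          have hk0 : k = 0 := by omega
          subst hk0
          simpa only [hg₀, if_pos rfl, if_neg (by omega : (1:ℕ) ≠ 0)] using hxy)
        (by
          intro a ha b hb hab
          simp only [Set.mem_setOf_eq] at ha hb
          simp only [hg₀] at hab
          have ha0 : a = 0 ∨ a = 1 := by omega
          have hb0 : b = 0 ∨ b = 1 := by omega
          rcases ha0 with rfl | rfl <;> rcases hb0 with rfl | rfl
          · rfl
          · rw [if_pos rfl, if_neg (by omega : (1:ℕ) ≠ 0)] at hab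
            exact absurd hab hxny
          · rw [if_pos rfl, if_neg (by omega : (1:ℕ) ≠ 0)] at hab
            exact absurd hab.symm hxny
          · rfl)
        (by
          intro k hk
          have hk0 : k = 0 ∨ k = 1 := by omega
          rcases hk0 with rfl | rfl
          · simpa only [hg₀, if_pos rfl] using hx
          · simpa only [hg₀, if_neg (by omega : (1:ℕ) ≠ 0)] using hy)
    exact ⟨m', by omega, g', h1, h2, h3, h4, h5⟩
  have hg0 : g 0 = x := by rw [hpre 0 (by omega)]; simp [hg₀]
  have hg1 : g 1 = y := by
    rw [hpre 1 le_rfl]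
    simp only [hg₀, if_neg (by omega : (1:ℕ) ≠ 0)]
  -- neighbours of the endpoint, all lie on the path
  have hNfin : (H.neighborSet (g m) ∩ A).Finite := hA.subset inter_subset_right
  have hNcard : L + 1 ≤ hNfin.toFinset.card := by
    rw [← Set.ncard_eq_toFinset_card _ hNfin]
    exact le_trans hLδ (hdeg (g m) (hmem m le_rfl))
  have hidx : ∀ t ∈ hNfin.toFinset, ∃ k, k < m ∧ g k = t := by
    intro t ht
    rw [Set.Finite.mem_toFinset] at ht
    exact hmax t ht.1 ht.2
  set idx : V → ℕ := fun t => if h : ∃ k, k < m ∧ g k = t then h.choose else 0 with hidxdef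
  have hidxspec : ∀ t ∈ hNfin.toFinset, idx t < m ∧ g (idx t) = t := by
    intro t ht
    have h := hidx t ht
    simp only [hidxdef, dif_pos h]
    exact h.choose_spec
  set I : Finset ℕ := hNfin.toFinset.image idx with hI
  have hIcard : L + 1 ≤ I.card := by
    rw [hI, Finset.card_image_of_injOn]
    · exact hNcard
    · intro a ha b hb hab
      have h1 := (hidxspec a ha).2
      have h2 := (hidxspec b hb).2
      rw [← h1, ← h2, hab]
  have hImem : ∀ i ∈ I, i < m ∧ H.Adj (g m) (g i) ∧ g i ∈ A := by
    intro i hi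
    rw [hI, Finset.mem_image] at hi
    obtain ⟨t, ht, rfl⟩ := hi
    obtain ⟨h1, h2⟩ := hidxspec t ht
    rw [Set.Finite.mem_toFinset] at ht
    exact ⟨h1, by rw [h2]; exact ht.1, by rw [h2]; exact ht.2⟩
  -- pigeonhole
  obtain ⟨a, ha, b, hb, hne, hres⟩ :=
    Finset.exists_ne_map_eq_of_card_lt_of_maps_to
      (s := I) (t := Finset.range L) (by rw [Finset.card_range]; omega)
      (f := fun k => k % L) (fun k _ => Finset.mem_range.mpr (Nat.mod_lt _ (by omega)))
  -- wlog i < j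
  obtain ⟨i, j, hiI, hjI, hij, hijres⟩ :
      ∃ i j, i ∈ I ∧ j ∈ I ∧ i < j ∧ i % L = j % L := by
    rcases lt_or_gt_of_ne hne with h | h
    · exact ⟨a, b, ha, hb, h, hres⟩
    · exact ⟨b, a, hb, ha, h, hres.symm⟩
  have him := hImem i hiI
  have hjm := hImem j hjI
  have hdvd : L ∣ j - i := (Nat.modEq_iff_dvd' (le_of_lt hij)).mp hijres
  have hjiL : L ≤ j - i := Nat.le_of_dvd (by omega) hdvd
  set D : ℕ := j - i with hD
  set M : ℕ := D + 2 with hM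
  have hij' : i + D = j := by omega
  have hjm' : j < m := hjm.1
  have hLM : L + 2 ≤ M := by omega
  -- the cyclic indexing function
  set cyc : ℕ → V := fun t => if t % M ≤ D then g (i + t % M) else g m with hcyc
  have hcycval1 : ∀ t, t % M ≤ D → cyc t = g (i + t % M) := by
    intro t ht; simp only [hcyc, if_pos ht]
  have hcycval2 : ∀ t, ¬ (t % M ≤ D) → cyc t = g m := by
    intro t ht; simp only [hcyc, if_neg ht]
  have hmodM : ∀ t : ℕ, t % M < M := fun t => Nat.mod_lt _ (by omega)
  have hsuccmod : ∀ t : ℕ, (t + 1) % M = if t % M + 1 = M then 0 else t % M + 1 := by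
    intro t
    rw [Nat.add_mod t 1 M, Nat.mod_eq_of_lt (show (1:ℕ) < M by omega)]
    split_ifs with h
    · rw [h, Nat.mod_self]
    · exact Nat.mod_eq_of_lt (by have := hmodM t; omega)
  have hadjc : ∀ t, H.Adj (cyc t) (cyc (t + 1)) := by
    intro t
    have hρ := hmodM t
    rcases Nat.lt_or_ge (t % M) D with h | h
    · rw [hcycval1 t (le_of_lt h), hcycval1 (t+1) (by rw [hsuccmod]; split_ifs with h2 <;> omega)]
      rw [hsuccmod, if_neg (by omega)]
      have := hadj (i + t % M) (by omega)
      rwa [show i + t % M + 1 = i + (t % M + 1) by omega] at this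
    · rcases Nat.lt_or_ge (t % M) (D + 1) with h2 | h2
      · -- t % M = D
        have hD' : t % M = D := by omega
        rw [hcycval1 t (by omega), hcycval2 (t+1) (by rw [hsuccmod]; split_ifs with h3 <;> omega)]
        rw [hD', hij']
        exact hjm.2.1.symm
      · -- t % M = D + 1 = M - 1
        have hD' : t % M = D + 1 := by omega
        rw [hcycval2 t (by omega), hcycval1 (t+1) (by rw [hsuccmod]; split_ifs with h3 <;> omega)]
        rw [hsuccmod, if_pos (by omega)]
        simpa using him.2.1
  have hcycA : ∀ t, cyc t ∈ A := by
    intro t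
    rcases le_or_gt (t % M) D with h | h
    · rw [hcycval1 t h]; exact hmem _ (by omega)
    · rw [hcycval2 t (by omega)]; exact hmem m le_rfl
  have hper : ∀ t q, cyc (t + M * q) = cyc t := by
    intro t q
    simp only [hcyc]
    rw [Nat.add_mul_mod_self_left]
  -- injectivity of cyc on windows of length < M
  have hcycinj : ∀ t k1 k2, k1 ≤ k2 → k2 < M → cyc (t + k1) = cyc (t + k2) → k1 = k2 := by
    intro t k1 k2 hk12 hk2 hval
    have hres12 : (t + k1) % M = (t + k2) % M := by
      rcases le_or_gt ((t+k1) % M) D with h1 | h1 <;>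
        rcases le_or_gt ((t+k2) % M) D with h2 | h2
      · rw [hcycval1 _ h1, hcycval1 _ h2] at hval
        have := hinj (show i + (t+k1) % M ∈ {k | k ≤ m} by simp only [Set.mem_setOf_eq]; omega)
          (show i + (t+k2) % M ∈ {k | k ≤ m} by simp only [Set.mem_setOf_eq]; omega) hval
        omega
      · rw [hcycval1 _ h1, hcycval2 _ (by omega)] at hval
        have := hinj (show i + (t+k1) % M ∈ {k | k ≤ m} by simp only [Set.mem_setOf_eq]; omega)
          (show m ∈ {k | k ≤ m} by simp only [Set.mem_setOf_eq]; omega) hval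
        omega
      · rw [hcycval2 _ (by omega), hcycval1 _ h2] at hval
        have := hinj (show m ∈ {k | k ≤ m} by simp only [Set.mem_setOf_eq]; omega)
          (show i + (t+k2) % M ∈ {k | k ≤ m} by simp only [Set.mem_setOf_eq]; omega) hval
        omega
      · have h1' := hmodM (t + k1)
        have h2' := hmodM (t + k2)
        omega
    have hdvd2 : M ∣ (t + k2) - (t + k1) := (Nat.modEq_iff_dvd' (by omega)).mp hres12
    have : (t + k2) - (t + k1) = k2 - k1 := by omega
    rw [this] at hdvd2
    rcases Nat.eq_zero_or_pos (k2 - k1) with h | h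
    · omega
    · have := Nat.le_of_dvd h hdvd2
      omega
  -- c is constant along L-shifts of cyc
  have hLstep : ∀ t, c (cyc t) = c (cyc (t + L)) := by
    intro t
    apply hc
    refine ⟨fun k => cyc (t + k), rfl, rfl, ?_, ?_, ?_⟩
    · intro k hk
      have := hadjc (t + k)
      rwa [show t + k + 1 = t + (k + 1) by omega] at this
    · intro k1 h1 k2 h2 hval
      simp only [Set.mem_setOf_eq] at h1 h2
      rcases Nat.le_total k1 k2 with h | h
      · exact hcycinj t k1 k2 h (by omega) hval
      · exact (hcycinj t k2 k1 h (by omega) hval.symm).symm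
    · intro k _; exact hcycA (t + k)
  have hiter : ∀ t q, c (cyc t) = c (cyc (t + q * L)) := by
    intro t q
    induction q with
    | zero => simp
    | succ q ih =>
        rw [ih, show t + (q+1) * L = (t + q * L) + L by ring]
        exact hLstep (t + q * L)
  -- coprimality and the unit step
  have hcop : Nat.Coprime L M := by
    obtain ⟨w, hw⟩ := hdvd
    have hMw : M = 2 + L * w := by omega
    rw [hMw]
    exact (Nat.coprime_add_mul_left_right L 2 w).mpr (Nat.coprime_two_right.mpr hLodd)
  obtain ⟨e, -, he⟩ := Nat.exists_mul_mod_eq_one_of_coprime hcop (by omega : 1 < M)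
  have honestep : ∀ t, c (cyc t) = c (cyc (t + 1)) := by
    intro t
    have h1 : c (cyc t) = c (cyc (t + e * L)) := hiter t e
    have hdm := Nat.div_add_mod (L * e) M
    rw [he] at hdm
    have : t + e * L = (t + 1) + M * (L * e / M) := by
      have : e * L = L * e := by ring
      omega
    rw [this, hper (t+1) (L * e / M)] at h1
    exact h1
  have hall : ∀ t, c (cyc t) = c (cyc 0) := by
    intro t
    induction t with
    | zero => rfl
    | succ t ih => rw [← honestep t, ih]
  have hcyc0 : cyc 0 = g i := by
    rw [hcycval1 0 (by simp), Nat.zero_mod, Nat.add_zero]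
  -- c is constant on the window [i, j] of g
  have hwin : ∀ k, i ≤ k → k ≤ j → c (g k) = c (g i) := by
    intro k h1 h2
    have hv : cyc (k - i) = g k := by
      rw [hcycval1 (k - i) (by rw [Nat.mod_eq_of_lt (by omega)]; omega),
        Nat.mod_eq_of_lt (by omega)]
      congr 1
      omega
    rw [← hv, hall (k - i), hcyc0]
  -- c is invariant under L-shifts along g
  have hstep : ∀ k, k + L ≤ m → c (g k) = c (g (k + L)) := by
    intro k hk
    apply hc
    refine ⟨fun t => g (k + t), rfl, rfl, ?_, ?_, ?_⟩
    · intro t ht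
      have := hadj (k + t) (by omega)
      rwa [show k + t + 1 = k + (t + 1) by omega] at this
    · intro t1 h1 t2 h2 hval
      simp only [Set.mem_setOf_eq] at h1 h2
      have := hinj (show k + t1 ∈ {k' | k' ≤ m} by simp only [Set.mem_setOf_eq]; omega)
        (show k + t2 ∈ {k' | k' ≤ m} by simp only [Set.mem_setOf_eq]; omega) hval
      omega
    · intro t ht; exact hmem (k + t) (by omega)
  -- propagate constancy to the whole path
  have hiLj : i + L ≤ j := by omega
  have aux1 : ∀ d k, i - k ≤ d → k ≤ j → c (g k) = c (g i) := by
    intro d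
    induction d with
    | zero => intro k hd hk; exact hwin k (by omega) hk
    | succ d ih =>
        intro k hd hk
        rcases le_or_gt i k with h | h
        · exact hwin k h hk
        · rw [hstep k (by omega)]
          exact ih (k + L) (by omega) (by omega)
  have aux2 : ∀ k, k ≤ m → c (g k) = c (g i) := by
    intro k
    induction k using Nat.strong_induction_on with
    | _ k ih =>
        intro hk
        rcases le_or_gt k j with h | h
        · exact aux1 i k (by omega) h
        · have hL_le_k : L ≤ k := by omega
          have h1 : c (g (k - L)) = c (g k) := by
            have := hstep (k - L) (by omega)
            rwa [show k - L + L = k by omega] at this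
          rw [← h1]
          exact ih (k - L) (by omega) (by omega)
  rw [← hg0, ← hg1, aux2 0 (by omega), aux2 1 (by omega)]


theorem main (H : SimpleGraph V) (hconn : H.Connected) (r : ℕ) (hr : 1 ≤ r)
    (hH : CFree H (2*r+1)) :
    ∀ s : ℕ, 1 ≤ s → s ≤ r → ∀ u : V, ∀ A : Set V, A.Finite → A.Nonempty →
      (∀ a ∈ A, H.dist u a = s) → (∀ a ∈ A, 2*r ≤ (H.neighborSet a ∩ A).ncard) → False := by
  intro s
  induction s using Nat.strong_induction_on with
  | _ s ih =>
    intro hs1 hsr u A hA hAne hdist hdeg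
    set L : ℕ := 2*r + 1 - 2*s with hLdef
    have hL2s : L + 2*s = 2*r+1 := by omega
    have hL1 : 1 ≤ L := by omega
    have hLodd : Odd L := ⟨r - s, by omega⟩
    have hLδ : L + 1 ≤ 2*r := by omega
    set c : V → V := fun z => (thePar H u)^[s-1] z with hcdef
    by_cases hcase : ∃ a b, FnPath H A L a b ∧ c a ≠ c b
    · -- Case 1: build a cycle of length 2r+1 through the common ancestor u
      obtain ⟨a, b, ⟨f, hf0, hfL, hfadj, hfinj, hfmem⟩, hcab⟩ := hcase
      have haA : a ∈ A := hf0 ▸ hfmem 0 (by omega)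
      have hbA : b ∈ A := hfL ▸ hfmem L le_rfl
      have hda : H.dist u a = s := hdist a haA
      have hdb : H.dist u b = s := hdist b hbA
      set n : ℕ := 2*r + 1 with hndef
      set F : ℕ → V := fun k =>
        if k ≤ L then f k
        else if k ≤ L + s then (thePar H u)^[k - L] b
        else (thePar H u)^[n - k] a with hFdef
      have hF1 : ∀ k, k ≤ L → F k = f k := fun k hk => by simp only [hFdef, if_pos hk]
      have hF2 : ∀ k, L < k → k ≤ L + s → F k = (thePar H u)^[k - L] b := fun k h1 h2 => by
        simp only [hFdef]
        rw [if_neg (show ¬ k ≤ L by omega), if_pos h2]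
      have hF3 : ∀ k, L + s < k → F k = (thePar H u)^[n - k] a := fun k h1 => by
        simp only [hFdef]
        rw [if_neg (show ¬ k ≤ L by omega), if_neg (show ¬ k ≤ L + s by omega)]
      -- distances from u
      have hdF1 : ∀ k, k ≤ L → H.dist u (F k) = s := by
        intro k hk; rw [hF1 k hk]; exact hdist _ (hfmem k hk)
      have hdF2 : ∀ k, L < k → k ≤ L + s → H.dist u (F k) = s - (k - L) := by
        intro k h1 h2
        rw [hF2 k h1 h2, dist_parIter hconn u b (k - L) (by omega), hdb]
      have hdF3 : ∀ k, L + s < k → k ≤ n → H.dist u (F k) = s - (n - k) := by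
        intro k h1 h2
        rw [hF3 k h1, dist_parIter hconn u a (n - k) (by omega), hda]
      -- adjacency
      have hFadj : ∀ k, k < n → H.Adj (F k) (F (k+1)) := by
        intro k hk
        rcases Nat.lt_or_ge k L with h | h
        · rw [hF1 k (by omega), hF1 (k+1) (by omega)]
          exact hfadj k h
        · rcases Nat.lt_or_ge k (L + s) with h2 | h2
          · -- L ≤ k < L + s : descending chain from b
            rcases Nat.eq_or_lt_of_le h with heq | hlt
            · -- k = L
              rw [hF1 k (by omega), hF2 (k+1) (by omega) (by omega)]
              have h5 : k + 1 - L = 1 := by omega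
              rw [h5]
              have h6 : f k = b := by rw [show k = L by omega, hfL]
              rw [h6]
              have hadjb := adj_parIter hconn u b (k := 0) (by omega)
              simp only [Nat.zero_add, Function.iterate_zero_apply] at hadjb
              exact hadjb.symm
            · rw [hF2 k (by omega) (by omega), hF2 (k+1) (by omega) (by omega)]
              have h3 : k + 1 - L = (k - L) + 1 := by omega
              rw [h3]
              exact (adj_parIter hconn u b (k := k - L) (by omega)).symm
          · rcases Nat.eq_or_lt_of_le h2 with heq | hlt
            · -- k = L + s : through the center u
              rw [hF2 k (by omega) (by omega), hF3 (k+1) (by omega)]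
              have h3 : k - L = s := by omega
              have h4 : n - (k+1) = s - 1 := by omega
              rw [h3, h4]
              have hc1 : (thePar H u)^[s] b = u := by
                have := parIter_center hconn u b
                rwa [hdb] at this
              have hc2 : (thePar H u)^[s] a = u := by
                have := parIter_center hconn u a
                rwa [hda] at this
              have hba : (thePar H u)^[s] b = (thePar H u)^[s] a := by rw [hc1, hc2]
              rw [hba]
              have hadja := adj_parIter hconn u a (k := s - 1) (by omega)
              rwa [show s - 1 + 1 = s by omega] at hadja
            · -- L + s < k < n : ascending chain to a
              rw [hF3 k (by omega), hF3 (k+1) (by omega)]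
              have h3 : n - k = (n - (k+1)) + 1 := by omega
              rw [h3]
              exact adj_parIter hconn u a (k := n - (k+1)) (by omega)
      have hFn : F n = F 0 := by
        rw [hF3 n (by omega), hF1 0 (by omega), hf0]
        simp
      have hFinj : Set.InjOn F {k | k < n} := by
        intro k1 hk1 k2 hk2 hval
        simp only [Set.mem_setOf_eq] at hk1 hk2
        have hdeq : H.dist u (F k1) = H.dist u (F k2) := by rw [hval]
        by_contra hne
        -- classify both indices into the three zones
        rcases le_or_gt k1 L with z1 | z1 <;> rcases le_or_gt k2 L with z2 | z2
        · rw [hF1 k1 z1, hF1 k2 z2] at hval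
          exact hne (hfinj (by simp only [Set.mem_setOf_eq]; omega)
            (by simp only [Set.mem_setOf_eq]; omega) hval)
        · rcases le_or_gt k2 (L+s) with z2' | z2'
          · rw [hdF1 k1 z1, hdF2 k2 z2 z2'] at hdeq; omega
          · rw [hdF1 k1 z1, hdF3 k2 z2' (by omega)] at hdeq; omega
        · rcases le_or_gt k1 (L+s) with z1' | z1'
          · rw [hdF2 k1 z1 z1', hdF1 k2 z2] at hdeq; omega
          · rw [hdF3 k1 z1' (by omega), hdF1 k2 z2] at hdeq; omega
        · rcases le_or_gt k1 (L+s) with z1' | z1' <;> rcases le_or_gt k2 (L+s) with z2' | z2'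
          · rw [hdF2 k1 z1 z1', hdF2 k2 z2 z2'] at hdeq
            exact hne (by omega)
          · -- k1 in b-chain, k2 in a-chain
            rw [hdF2 k1 z1 z1', hdF3 k2 z2' (by omega)] at hdeq
            have ht : k1 - L = n - k2 := by omega
            have htle : n - k2 ≤ s - 1 := by omega
            rw [hF2 k1 z1 z1', hF3 k2 z2', ht] at hval
            apply hcab
            have := congrArg ((thePar H u)^[s - 1 - (n - k2)]) hval
            rw [← Function.iterate_add_apply, ← Function.iterate_add_apply] at this
            have hidx : s - 1 - (n - k2) + (n - k2) = s - 1 := by omega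
            rw [hidx] at this
            exact this.symm
          · rw [hdF3 k1 z1' (by omega), hdF2 k2 z2 z2'] at hdeq
            have ht : k2 - L = n - k1 := by omega
            have htle : n - k1 ≤ s - 1 := by omega
            rw [hF3 k1 z1', hF2 k2 z2 z2', ht] at hval
            apply hcab
            have := congrArg ((thePar H u)^[s - 1 - (n - k1)]) hval
            rw [← Function.iterate_add_apply, ← Function.iterate_add_apply] at this
            have hidx : s - 1 - (n - k1) + (n - k1) = s - 1 := by omega
            rw [hidx] at this
            exact this
          · rw [hdF3 k1 z1' (by omega), hdF3 k2 z2' (by omega)] at hdeq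
            exact hne (by omega)
      obtain ⟨cw, hcw, hcwlen⟩ := cycle_of_fn (H := H) F n (by omega) hFadj hFn hFinj
      exact hH (F 0) cw hcw (by rw [hcwlen])
    · -- Case 2: the depth-1 ancestor is constant on components; recurse
      push_neg at hcase
      have hcinv : ∀ a b, FnPath H A L a b → c a = c b := fun a b hp => hcase a b hp
      have hadjstep : ∀ z t, z ∈ A → t ∈ A → H.Adj z t → c z = c t := by
        intro z t hz ht hadj
        exact Ecore hA hL1 hLodd hLδ hdeg c hcinv (extend_path (H := H) hA) hz ht hadj
      obtain ⟨a0, ha0⟩ := hAne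
      set R : Set V := {z | z ∈ A ∧ ∃ p : H.Walk a0 z, ∀ t ∈ p.support, t ∈ A} with hRdef
      have ha0R : a0 ∈ R := ⟨ha0, Walk.nil, by simp [ha0]⟩
      have hRA : R ⊆ A := fun z hz => hz.1
      have hclosed : ∀ z ∈ R, ∀ t, H.Adj z t → t ∈ A → t ∈ R := by
        rintro z ⟨hzA, p, hp⟩ t hadj ht
        refine ⟨ht, p.concat hadj, ?_⟩
        intro v hv
        rw [Walk.support_concat] at hv
        rw [List.mem_append] at hv
        rcases hv with h | h
        · exact hp v h
        · rw [List.mem_singleton] at h; exact h ▸ ht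
      have hwalkconst : ∀ (w z : V) (p : H.Walk w z), (∀ t ∈ p.support, t ∈ A) → c w = c z := by
        intro w z p
        induction p with
        | nil => intro _; rfl
        | cons hadj q ihq =>
            rename_i w' v' z'
            intro hsup
            have h1 : w' ∈ A := hsup _ (Walk.start_mem_support _)
            have h2 : v' ∈ A := by
              apply hsup
              rw [Walk.support_cons]
              exact List.mem_cons_of_mem _ (Walk.start_mem_support _)
            rw [hadjstep w' v' h1 h2 hadj]
            apply ihq
            intro t ht
            apply hsup
            rw [Walk.support_cons]
            exact List.mem_cons_of_mem _ ht
      have hconst : ∀ z ∈ R, c z = c a0 := by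
        rintro z ⟨hzA, p, hp⟩
        exact (hwalkconst a0 z p hp).symm
      set w : V := c a0 with hwdef
      have hda0 : H.dist u a0 = s := hdist a0 ha0
      have hdistw : H.dist u w = 1 := by
        show H.dist u ((thePar H u)^[s-1] a0) = 1
        rw [dist_parIter hconn u a0 (s-1) (by omega), hda0]
        omega
      have hzdist : ∀ z ∈ R, H.dist w z = s - 1 := by
        intro z hz
        have hzA := hRA hz
        have hdz : H.dist u z = s := hdist z hzA
        have hup : H.dist w z ≤ s - 1 := by
          have := dist_to_parIter hconn u z (s-1) (by omega)
          have hcz : (thePar H u)^[s-1] z = w := hconst z hz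
          rwa [hcz] at this
        have hlow : s ≤ 1 + H.dist w z := by
          have := hconn.dist_triangle (u := u) (v := w) (w := z)
          omega
        omega
      have hdegR : ∀ z ∈ R, 2*r ≤ (H.neighborSet z ∩ R).ncard := by
        intro z hz
        have : H.neighborSet z ∩ R = H.neighborSet z ∩ A := by
          apply le_antisymm
          · exact inter_subset_inter_right _ hRA
          · rintro t ⟨h1, h2⟩
            exact ⟨h1, hclosed z hz t h1 h2⟩
        rw [this]
        exact hdeg z (hRA hz)
      rcases Nat.lt_or_ge 1 s with hs2 | hs2
      · -- s ≥ 2 : recurse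
        exact ih (s-1) (by omega) (by omega) (by omega) w R (hA.subset hRA) ⟨a0, ha0R⟩
          (fun z hz => by rw [hzdist z hz]) hdegR
      · -- s = 1 : R ⊆ {w}, contradicting the degree bound
        have hs1' : s = 1 := by omega
        have hRw : R ⊆ {w} := by
          intro z hz
          have := hzdist z hz
          rw [hs1'] at this
          simp only [Nat.sub_self] at this
          have hreach : H.Reachable w z := hconn.preconnected w z
          have := (hreach.dist_eq_zero_iff).mp this
          simp [this]
        have h2 : (H.neighborSet a0 ∩ R).ncard ≤ 1 := by
          have hsub : H.neighborSet a0 ∩ R ⊆ {w} := fun t ht => hRw ht.2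
          calc (H.neighborSet a0 ∩ R).ncard ≤ ({w} : Set V).ncard :=
                Set.ncard_le_ncard hsub (Set.finite_singleton w)
            _ = 1 := Set.ncard_singleton w
        have := hdegR a0 ha0R
        omega


end SphereAux

/-- In a `C_{2r+1}`-free graph of radius at most `r` from `v`, the subgraph
induced on each sphere of radius `s ≤ r` about `v` is `(2r-1)`-degenerate and
hence `2r`-colorable. -/
theorem sphere_induced_degenerate_and_colorable {V : Type*}
    (r : ℕ) (hr : 1 ≤ r) (H : SimpleGraph V) (hH : CFree H (2 * r + 1))
    (v : V) (hv : ∀ w : V, H.Reachable v w ∧ H.dist v w ≤ r)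
    (s : ℕ) (hs : s ≤ r) :
    Degenerate (H.induce {w | H.dist v w = s}) (2 * r - 1) ∧
      (H.induce {w | H.dist v w = s}).Colorable (2 * r) := by
  have hconn : H.Connected := by
    have hne : Nonempty V := ⟨v⟩
    exact ⟨fun x y => ((hv x).1.symm.trans (hv y).1)⟩
  have hdeg : Degenerate (H.induce {w | H.dist v w = s}) (2 * r - 1) := by
    intro S hSne hSfin
    rcases Nat.eq_zero_or_pos s with hs0 | hs1
    · -- s = 0 : the sphere is {v}; no edges
      obtain ⟨z, hz⟩ := hSne
      refine ⟨z, hz, ?_⟩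
      have hempty : (H.induce {w | H.dist v w = s}).neighborSet z ∩ S = ∅ := by
        rw [Set.eq_empty_iff_forall_notMem]
        rintro t ⟨ht1, _⟩
        rw [mem_neighborSet] at ht1
        have hadj : H.Adj ↑z ↑t := ht1
        have hz0 : H.dist v ↑z = 0 := by have := z.2; simpa [hs0] using this
        have ht0 : H.dist v ↑t = 0 := by have := t.2; simpa [hs0] using this
        have hzv : v = ↑z := ((hv ↑z).1.dist_eq_zero_iff).mp hz0
        have htv : v = ↑t := ((hv ↑t).1.dist_eq_zero_iff).mp ht0
        rw [← hzv, ← htv] at hadj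
        exact H.irrefl hadj
      rw [hempty]
      simp
    · by_contra hno
      push_neg at hno
      have hno' : ∀ z ∈ S, 2 * r ≤
          ((H.induce {w | H.dist v w = s}).neighborSet z ∩ S).ncard := by
        intro z hz
        have := hno z hz
        omega
      set A : Set V := Subtype.val '' S with hAdef
      have hcardtrans : ∀ z : {w | H.dist v w = s},
          ((H.induce {w | H.dist v w = s}).neighborSet z ∩ S).ncard =
          (H.neighborSet ↑z ∩ A).ncard := by
        intro z
        have himg : Subtype.val '' ((H.induce {w | H.dist v w = s}).neighborSet z ∩ S) =
            H.neighborSet ↑z ∩ A := by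
          ext t
          constructor
          · rintro ⟨t', ⟨ht1, ht2⟩, rfl⟩
            exact ⟨ht1, ⟨t', ht2, rfl⟩⟩
          · rintro ⟨ht1, ⟨t', ht2, rfl⟩⟩
            exact ⟨t', ⟨ht1, ht2⟩, rfl⟩
        rw [← himg, Set.ncard_image_of_injective _ Subtype.val_injective]
      exact absurd (SphereAux.main H hconn r hr hH s hs1 hs (u := v) A
        (hSfin.image _) (hSne.image _)
        (by rintro a ⟨a', _, rfl⟩; exact a'.2)
        (by
          rintro a ⟨a', ha', rfl⟩
          rw [← hcardtrans a']
          exact hno' a' ha')) (fun h => h)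
  refine ⟨hdeg, ?_⟩
  have := SphereAux.degenerate_colorable _ _ hdeg
  have h2r : 2 * r - 1 + 1 = 2 * r := by omega
  rwa [h2r] at this
end
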